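/- arXiv:1809.00179 — 3 statements merged into one kernel-verified Lean document; each statement's English description precedes it below -/
import Mathlib

section
/- Every closed-world dependency is relativizable. That is, if D is a dependency such that for all M and all relations R over M, ⟨M,R⟩ ∈ D iff ⟨M',R⟩ ∈ D where M' = {m ∈ M : m occurs in some tuple of R}, then for every unary relation symbol P the relativized atom D^P is definable in FO(D); in fact D^P v is equivalent to (⋀_{vᵢ ∈ v} P vᵢ) ∧ D v. -/
/-! # A framework for lax team semantics (Galliani-style)

Signatures, structures, terms, NNF formulas of `FO(𝒟)` with dependency atoms,
lax team semantics, Tarskian semantics for first-order formulas, and the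
notions of dependency used in the paper. -/

/-- A first-order signature: function and relation symbols of each arity. -/
structure Sig : Type 1 where
  Func : ℕ → Type
  Rel : ℕ → Type

/-- A structure for the signature `σ` with domain `M`. -/
structure Struc (σ : Sig) (M : Type) : Type where
  fn : ∀ n, σ.Func n → (Fin n → M) → M
  rel : ∀ n, σ.Rel n → (Fin n → M) → Prop

/-- Terms over `σ`, with variables indexed by `ℕ`. -/
inductive Tm (σ : Sig) : Type where
  | var : ℕ → Tm σ
  | app : ∀ n, σ.Func n → (Fin n → Tm σ) → Tm σ

def Tm.eval {σ : Sig} {M : Type} (𝔐 : Struc σ M) (s : ℕ → M) : Tm σ → M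
  | .var v => s v
  | .app n f ts => 𝔐.fn n f fun i => (ts i).eval 𝔐 s

def Tm.vars {σ : Sig} : Tm σ → Set ℕ
  | .var v => {v}
  | .app _ _ ts => ⋃ i, (ts i).vars

/-- A `k`-ary dependency notion: a class of `k`-ary relations over every domain. -/
def DepOn (k : ℕ) : Type 1 :=
  ∀ M : Type, Set (Fin k → M) → Prop

/-- Closure under isomorphisms (part of the definition of a dependency). -/
def DepOn.IsoClosed {k : ℕ} (D : DepOn k) : Prop :=
  ∀ (M N : Type) (e : M ≃ N) (R : Set (Fin k → M)),
    D M R → D N ((fun xs => (⇑e) ∘ xs) '' R)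

/-- Downwards closure. -/
def DepOn.DownClosed {k : ℕ} (D : DepOn k) : Prop :=
  ∀ (M : Type) (R Q : Set (Fin k → M)), D M R → Q ⊆ R → D M Q

/-- Union closure. -/
def DepOn.UnionClosed {k : ℕ} (D : DepOn k) : Prop :=
  ∀ (M : Type) (I : Type) (Rf : I → Set (Fin k → M)),
    (∀ j, D M (Rf j)) → D M (⋃ j, Rf j)

/-- The empty team property. -/
def DepOn.EmptyTeamProp {k : ℕ} (D : DepOn k) : Prop :=
  ∀ M : Type, D M (∅ : Set (Fin k → M))

/-- Closed-world dependencies: only the elements occurring in tuples of `R` matter. -/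
def DepOn.ClosedWorld {k : ℕ} (D : DepOn k) : Prop :=
  ∀ (M : Type) (R : Set (Fin k → M)),
    D M R ↔ D {m : M // ∃ xs ∈ R, ∃ i, xs i = m} {xs | (fun i => (xs i : M)) ∈ R}

/-- Negation normal form formulas of `FO(𝒟)`: first-order literals, dependency
atoms indexed by `ι` (with arities `ar`), conjunction, disjunction, quantifiers. -/
inductive Fml (σ : Sig) (ι : Type) (ar : ι → ℕ) : Type where
  | eq : Tm σ → Tm σ → Fml σ ι ar
  | neq : Tm σ → Tm σ → Fml σ ι ar
  | rel : ∀ n, σ.Rel n → (Fin n → Tm σ) → Fml σ ι ar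
  | nrel : ∀ n, σ.Rel n → (Fin n → Tm σ) → Fml σ ι ar
  | dep : ∀ i : ι, (Fin (ar i) → Tm σ) → Fml σ ι ar
  | and : Fml σ ι ar → Fml σ ι ar → Fml σ ι ar
  | or : Fml σ ι ar → Fml σ ι ar → Fml σ ι ar
  | ex : ℕ → Fml σ ι ar → Fml σ ι ar
  | all : ℕ → Fml σ ι ar → Fml σ ι ar

namespace Fml
variable {σ : Sig} {ι : Type} {ar : ι → ℕ}

/-- Free variables of a formula. -/
def free : Fml σ ι ar → Set ℕ
  | .eq t u => t.vars ∪ u.vars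
  | .neq t u => t.vars ∪ u.vars
  | .rel _ _ ts => ⋃ i, (ts i).vars
  | .nrel _ _ ts => ⋃ i, (ts i).vars
  | .dep _ ts => ⋃ i, (ts i).vars
  | .and φ ψ => φ.free ∪ ψ.free
  | .or φ ψ => φ.free ∪ ψ.free
  | .ex v φ => φ.free \ {v}
  | .all v φ => φ.free \ {v}

/-- The relation symbols occurring in negated literals of a formula. -/
def negRels : Fml σ ι ar → Set (Σ n, σ.Rel n)
  | .eq _ _ => ∅
  | .neq _ _ => ∅
  | .rel _ _ _ => ∅
  | .nrel n R _ => {⟨n, R⟩}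
  | .dep _ _ => ∅
  | .and φ ψ => φ.negRels ∪ ψ.negRels
  | .or φ ψ => φ.negRels ∪ ψ.negRels
  | .ex _ φ => φ.negRels
  | .all _ φ => φ.negRels

open Classical in
/-- The number of occurrences (positive or negative) of a relation symbol. -/
noncomputable def countRel (S : Σ n, σ.Rel n) : Fml σ ι ar → ℕ
  | .eq _ _ => 0
  | .neq _ _ => 0
  | .rel n R _ => if (⟨n, R⟩ : Σ n, σ.Rel n) = S then 1 else 0
  | .nrel n R _ => if (⟨n, R⟩ : Σ n, σ.Rel n) = S then 1 else 0
  | .dep _ _ => 0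
  | .and φ ψ => countRel S φ + countRel S ψ
  | .or φ ψ => countRel S φ + countRel S ψ
  | .ex _ φ => countRel S φ
  | .all _ φ => countRel S φ

/-- Quantifier-free formulas. -/
def QFree : Fml σ ι ar → Prop
  | .and φ ψ => QFree φ ∧ QFree ψ
  | .or φ ψ => QFree φ ∧ QFree ψ
  | .ex _ _ => False
  | .all _ _ => False
  | _ => True

end Fml

/-- A team: a set of assignments. -/
abbrev Team (M : Type) := Set (ℕ → M)

/-- Lax supplementation `X[H/v]`. -/
def teamSupp {M : Type} (X : Team M) (H : (ℕ → M) → Set M) (v : ℕ) : Team M :=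
  {s' | ∃ s ∈ X, ∃ m ∈ H s, s' = Function.update s v m}

/-- Duplication `X[M/v]`. -/
def teamDup {M : Type} (X : Team M) (v : ℕ) : Team M :=
  teamSupp X (fun _ => Set.univ) v

/-- Simultaneous update of an assignment on a tuple of variables. -/
def updVec {M : Type} (s : ℕ → M) {l : ℕ} (vs : Fin l → ℕ) (m : Fin l → M) : ℕ → M :=
  (List.finRange l).foldr (fun j t => Function.update t (vs j) (m j)) s

/-- Lax supplementation along a tuple of variables. -/
def teamSuppVec {M : Type} (X : Team M) {l : ℕ} (H : (ℕ → M) → Set (Fin l → M))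
    (vs : Fin l → ℕ) : Team M :=
  {s' | ∃ s ∈ X, ∃ m ∈ H s, s' = updVec s vs m}

/-- Restriction `X↾V` of a team to a set of variables. -/
def teamRestrict {M : Type} (X : Team M) (V : Set ℕ) : Set (V → M) :=
  (fun s (v : V) => s v.1) '' X

/-- `X(t)`: the relation of the values of the tuple of terms `t` in the team `X`. -/
def teamVals {σ : Sig} {M : Type} (𝔐 : Struc σ M) (X : Team M) {k : ℕ}
    (t : Fin k → Tm σ) : Set (Fin k → M) :=
  {xs | ∃ s ∈ X, xs = fun i => (t i).eval 𝔐 s}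

/-- `X↾(v = w)(v)`: the relation encoded in `X` by the pair of variable tuples `v`, `w`. -/
def pairRel {M : Type} (Y : Team M) {k : ℕ} (v w : Fin k → ℕ) : Set (Fin k → M) :=
  {xs | ∃ s ∈ Y, (∀ j, xs j = s (v j)) ∧ ∀ j, s (v j) = s (w j)}

/-- Lax team semantics for `FO(𝒟)`. -/
def Fml.TSat {σ : Sig} {ι : Type} {ar : ι → ℕ} (𝒟 : ∀ i, DepOn (ar i)) {M : Type}
    (𝔐 : Struc σ M) : Fml σ ι ar → Team M → Prop
  | .eq t u, X => ∀ s ∈ X, t.eval 𝔐 s = u.eval 𝔐 s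
  | .neq t u, X => ∀ s ∈ X, t.eval 𝔐 s ≠ u.eval 𝔐 s
  | .rel n R ts, X => ∀ s ∈ X, 𝔐.rel n R fun i => (ts i).eval 𝔐 s
  | .nrel n R ts, X => ∀ s ∈ X, ¬ 𝔐.rel n R fun i => (ts i).eval 𝔐 s
  | .dep i ts, X => 𝒟 i M (teamVals 𝔐 X ts)
  | .and φ ψ, X => Fml.TSat 𝒟 𝔐 φ X ∧ Fml.TSat 𝒟 𝔐 ψ X
  | .or φ ψ, X => ∃ Y Z : Team M, X = Y ∪ Z ∧ Fml.TSat 𝒟 𝔐 φ Y ∧ Fml.TSat 𝒟 𝔐 ψ Z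
  | .ex v φ, X => ∃ H : (ℕ → M) → Set M, (∀ s ∈ X, (H s).Nonempty) ∧
      Fml.TSat 𝒟 𝔐 φ (teamSupp X H v)
  | .all v φ, X => Fml.TSat 𝒟 𝔐 φ (teamDup X v)

/-- The arity function of the empty dependency family. -/
abbrev noDep : Empty → ℕ := fun i => i.elim

/-- Pure first-order formulas: no dependency atoms. -/
abbrev FOFml (σ : Sig) := Fml σ Empty noDep

/-- The empty dependency family. -/
def noDepFam : ∀ i : Empty, DepOn (noDep i) := fun i => i.elim

/-- Tarskian satisfaction for first-order formulas. -/
def FOSat {σ : Sig} {M : Type} (𝔐 : Struc σ M) : (ℕ → M) → FOFml σ → Prop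
  | s, .eq t u => t.eval 𝔐 s = u.eval 𝔐 s
  | s, .neq t u => t.eval 𝔐 s ≠ u.eval 𝔐 s
  | s, .rel n R ts => 𝔐.rel n R fun i => (ts i).eval 𝔐 s
  | s, .nrel n R ts => ¬ 𝔐.rel n R fun i => (ts i).eval 𝔐 s
  | _, .dep i _ => i.elim
  | s, .and φ ψ => FOSat 𝔐 s φ ∧ FOSat 𝔐 s ψ
  | s, .or φ ψ => FOSat 𝔐 s φ ∨ FOSat 𝔐 s ψ
  | s, .ex v φ => ∃ m : M, FOSat 𝔐 (Function.update s v m) φ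
  | s, .all v φ => ∀ m : M, FOSat 𝔐 (Function.update s v m) φ

/-- Truth of a sentence of `FO(𝒟)` in a model, via the singleton team. -/
def STrue {σ : Sig} {ι : Type} {ar : ι → ℕ} (𝒟 : ∀ i, DepOn (ar i)) {M : Type}
    (𝔐 : Struc σ M) (φ : Fml σ ι ar) : Prop :=
  ∀ s : ℕ → M, Fml.TSat 𝒟 𝔐 φ {s}

/-- Tarskian truth of a first-order sentence. -/
def FOTrue {σ : Sig} {M : Type} (𝔐 : Struc σ M) (φ : FOFml σ) : Prop :=
  ∀ s : ℕ → M, FOSat 𝔐 s φ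

open Classical in
/-- The structure `𝔐[Q/R]`: change the interpretation of `R` to `Q`. -/
noncomputable def Struc.updRel {σ : Sig} {M : Type} (𝔐 : Struc σ M) {k : ℕ} (R : σ.Rel k)
    (Q : Set (Fin k → M)) : Struc σ M where
  fn := 𝔐.fn
  rel := fun n S xs =>
    if h : (⟨n, S⟩ : Σ n, σ.Rel n) = ⟨k, R⟩ then
      (fun i => xs (Fin.cast (congrArg Sigma.fst h).symm i)) ∈ Q
    else 𝔐.rel n S xs

/-- Extend a signature by `n` new relation symbols of arities `a`. -/
def Sig.addRels (σ : Sig) (n : ℕ) (a : Fin n → ℕ) : Sig where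
  Func := σ.Func
  Rel := fun m => σ.Rel m ⊕ {i : Fin n // a i = m}

/-- Lift a term to an extended signature. -/
def Tm.liftR {σ : Sig} {n : ℕ} {a : Fin n → ℕ} : Tm σ → Tm (σ.addRels n a)
  | .var v => .var v
  | .app m f ts => .app m f fun i => (ts i).liftR

/-- Interpret the new relation symbols by the relations `Q`. -/
def Struc.withRels {σ : Sig} {M : Type} (𝔐 : Struc σ M) {n : ℕ} {a : Fin n → ℕ}
    (Q : ∀ i, Set (Fin (a i) → M)) : Struc (σ.addRels n a) M where
  fn := 𝔐.fn
  rel := fun m S xs =>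
    match S with
    | Sum.inl T => 𝔐.rel m T xs
    | Sum.inr i => (fun j => xs (Fin.cast i.2 j)) ∈ Q i.1

/-- The signature `{R}` with a single `k`-ary relation symbol. -/
def relSig (k : ℕ) : Sig where
  Func := fun _ => Empty
  Rel := fun n => PLift (n = k)

/-- The structure `⟨M, R⟩` over the signature `{R}`. -/
def relStruc (k : ℕ) {M : Type} (R : Set (Fin k → M)) : Struc (relSig k) M where
  fn := fun _ f => f.elim
  rel := fun _ S xs => (fun i => xs (Fin.cast S.down.symm i)) ∈ R

/-- The empty signature. -/
def emptySig : Sig where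
  Func := fun _ => Empty
  Rel := fun _ => Empty

/-- The unique structure over the empty signature with domain `M`. -/
def emptyStruc (M : Type) : Struc emptySig M where
  fn := fun _ f => f.elim
  rel := fun _ r => r.elim

/-- A dependency is first order if it is defined by a first-order sentence `φ(R)`. -/
def FirstOrderDep {k : ℕ} (D : DepOn k) : Prop :=
  ∃ φ : FOFml (relSig k), φ.free = ∅ ∧
    ∀ (M : Type), Nonempty M → ∀ R : Set (Fin k → M), (D M R ↔ FOTrue (relStruc k R) φ)

/-- A family of dependencies is strongly first order if every sentence of `FO(𝒟)`
(over any signature) is equivalent to some first-order sentence. -/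
def StronglyFO {ι : Type} {ar : ι → ℕ} (𝒟 : ∀ i, DepOn (ar i)) : Prop :=
  ∀ (σ : Sig) (φ : Fml σ ι ar), φ.free = ∅ →
    ∃ ψ : FOFml σ, ψ.free = ∅ ∧
      ∀ (M : Type) (𝔐 : Struc σ M), STrue 𝒟 𝔐 φ ↔ FOTrue 𝔐 ψ

/-- A single dependency is strongly first order. -/
def DepOn.StronglyFO1 {k : ℕ} (D : DepOn k) : Prop :=
  StronglyFO (ι := Unit) (ar := fun _ => k) fun _ => D

/-- `D_max`: the relations satisfying `D` that are maximal among those satisfying `D`. -/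
def Dmax {k : ℕ} (D : DepOn k) : DepOn k :=
  fun M R => D M R ∧ ¬ ∃ S : Set (Fin k → M), R ⊂ S ∧ D M S

/-- The constancy dependency. -/
def constDep : DepOn 1 := fun _ R => R.Subsingleton

/-- A dependency `D` is relativizable if each relativized atom `D^P` is definable
in `FO(D)`. -/
def DepOn.Relativizable {k : ℕ} (D : DepOn k) : Prop :=
  ∀ (σ : Sig) (P : σ.Rel 1) (t : Fin k → Tm σ),
    ∃ φ : Fml σ Unit (fun _ => k),
      ∀ (M : Type) (𝔐 : Struc σ M) (X : Team M),
        Fml.TSat (fun _ => D) 𝔐 φ X ↔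
          ((∀ s ∈ X, ∀ i, 𝔐.rel 1 P fun _ => (t i).eval 𝔐 s) ∧
            D {m : M // 𝔐.rel 1 P fun _ => m}
              {xs | ∃ s ∈ X, (fun i => (xs i : M)) = fun i => (t i).eval 𝔐 s})

/-- The union of two dependency families. -/
def sumFam {ιS ιD : Type} {arS : ιS → ℕ} {arD : ιD → ℕ}
    (𝒮 : ∀ i, DepOn (arS i)) (𝒟 : ∀ i, DepOn (arD i)) :
    ∀ i : ιS ⊕ ιD, DepOn (Sum.elim arS arD i)
  | .inl i => 𝒮 i
  | .inr i => 𝒟 i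

/-- The always-true formula. -/
def Fml.verum {σ : Sig} {ι : Type} {ar : ι → ℕ} : Fml σ ι ar := .eq (.var 0) (.var 0)

/-- The formula satisfied only by the empty team. -/
def Fml.falsum {σ : Sig} {ι : Type} {ar : ι → ℕ} : Fml σ ι ar := .neq (.var 0) (.var 0)

/-- Finite conjunction. -/
def bigAndL {σ : Sig} {ι : Type} {ar : ι → ℕ} (l : List (Fml σ ι ar)) : Fml σ ι ar :=
  l.foldr Fml.and Fml.verum

/-- Finite disjunction. -/
def bigOrL {σ : Sig} {ι : Type} {ar : ι → ℕ} (l : List (Fml σ ι ar)) : Fml σ ι ar :=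
  l.foldr Fml.or Fml.falsum

/-- Equality of two variables. -/
def veq {σ : Sig} {ι : Type} {ar : ι → ℕ} (a b : ℕ) : Fml σ ι ar := .eq (.var a) (.var b)

/-- Inequality of two variables. -/
def vne {σ : Sig} {ι : Type} {ar : ι → ℕ} (a b : ℕ) : Fml σ ι ar := .neq (.var a) (.var b)

/-- Universal quantification over a list of variables. -/
def alls {σ : Sig} {ι : Type} {ar : ι → ℕ} (vs : List ℕ) (φ : Fml σ ι ar) : Fml σ ι ar :=
  vs.foldr Fml.all φ

/-- Existential quantification over a list of variables. -/
def exs {σ : Sig} {ι : Type} {ar : ι → ℕ} (vs : List ℕ) (φ : Fml σ ι ar) : Fml σ ι ar :=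
  vs.foldr Fml.ex φ
/-- Replacement of a single occurrence of the dependency atom `dep i₀ t` by the
first-order atom `rel S t`. -/
inductive ReplOne {σ : Sig} {ι : Type} {ar : ι → ℕ} (i₀ : ι) (S : σ.Rel (ar i₀)) :
    Fml σ ι ar → Fml σ ι ar → Prop
  | atom (t : Fin (ar i₀) → Tm σ) : ReplOne i₀ S (.dep i₀ t) (.rel (ar i₀) S t)
  | andL {φ φ' ψ} : ReplOne i₀ S φ φ' → ReplOne i₀ S (.and φ ψ) (.and φ' ψ)
  | andR {φ ψ ψ'} : ReplOne i₀ S ψ ψ' → ReplOne i₀ S (.and φ ψ) (.and φ ψ')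
  | orL {φ φ' ψ} : ReplOne i₀ S φ φ' → ReplOne i₀ S (.or φ ψ) (.or φ' ψ)
  | orR {φ ψ ψ'} : ReplOne i₀ S ψ ψ' → ReplOne i₀ S (.or φ ψ) (.or φ ψ')
  | exC {v φ φ'} : ReplOne i₀ S φ φ' → ReplOne i₀ S (.ex v φ) (.ex v φ')
  | allC {v φ φ'} : ReplOne i₀ S φ φ' → ReplOne i₀ S (.all v φ) (.all v φ')

/-- Replacement of every occurrence of the relation symbol `S` (which may only
occur positively) by one of the `n` new relation symbols of `σ.addRels n (fun _ => k)`. -/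
inductive ReplEach {σ : Sig} {k n : ℕ} (S : σ.Rel k) :
    FOFml σ → FOFml (σ.addRels n fun _ => k) → Prop
  | eqC (t u : Tm σ) : ReplEach S (.eq t u) (.eq t.liftR u.liftR)
  | neqC (t u : Tm σ) : ReplEach S (.neq t u) (.neq t.liftR u.liftR)
  | relS (t : Fin k → Tm σ) (i : Fin n) :
      ReplEach S (.rel k S t) (.rel k (Sum.inr ⟨i, rfl⟩) fun j => (t j).liftR)
  | relO {m : ℕ} (T : σ.Rel m) (t : Fin m → Tm σ)
      (h : (⟨m, T⟩ : Σ n, σ.Rel n) ≠ ⟨k, S⟩) :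
      ReplEach S (.rel m T t) (.rel m (Sum.inl T) fun j => (t j).liftR)
  | nrelO {m : ℕ} (T : σ.Rel m) (t : Fin m → Tm σ)
      (h : (⟨m, T⟩ : Σ n, σ.Rel n) ≠ ⟨k, S⟩) :
      ReplEach S (.nrel m T t) (.nrel m (Sum.inl T) fun j => (t j).liftR)
  | andC {φ φ' ψ ψ'} : ReplEach S φ φ' → ReplEach S ψ ψ' →
      ReplEach S (.and φ ψ) (.and φ' ψ')
  | orC {φ φ' ψ ψ'} : ReplEach S φ φ' → ReplEach S ψ ψ' →
      ReplEach S (.or φ ψ) (.or φ' ψ')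
  | exC {v φ φ'} : ReplEach S φ φ' → ReplEach S (.ex v φ) (.ex v φ')
  | allC {v φ φ'} : ReplEach S φ φ' → ReplEach S (.all v φ) (.all v φ')

/-- Replacement of the unique (positive) occurrence `rel W t` of `W` by the formula
`v = w ∧ t = w`, for tuples `v`, `w` of new variables. -/
inductive ReplW {σ : Sig} {ι : Type} {ar : ι → ℕ} {k : ℕ} (W : σ.Rel k) (v w : Fin k → ℕ) :
    Fml σ ι ar → Fml σ ι ar → Prop
  | atom (t : Fin k → Tm σ) :
      ReplW W v w (.rel k W t)
        (.and (bigAndL ((List.finRange k).map fun j => veq (v j) (w j)))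
              (bigAndL ((List.finRange k).map fun j => Fml.eq (t j) (.var (w j)))))
  | andL {φ φ' ψ} : ReplW W v w φ φ' → ReplW W v w (.and φ ψ) (.and φ' ψ)
  | andR {φ ψ ψ'} : ReplW W v w ψ ψ' → ReplW W v w (.and φ ψ) (.and φ ψ')
  | orL {φ φ' ψ} : ReplW W v w φ φ' → ReplW W v w (.or φ ψ) (.or φ' ψ)
  | orR {φ ψ ψ'} : ReplW W v w ψ ψ' → ReplW W v w (.or φ ψ) (.or φ ψ')

/-- The formula `D_∪(v₁ … vₙ; w₁ … wₙ)` of the paper: it asserts that the union of the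
relations encoded by the pairs `(vᵢ, wᵢ)` satisfies the dependency `i₀`. -/
def depUnion {σ : Sig} {ι : Type} {ar : ι → ℕ} (i₀ : ι) (n : ℕ)
    (v w : Fin n → Fin (ar i₀) → ℕ) (p : Fin n → ℕ) (q : ℕ) (z₀ z₁ : Fin (ar i₀) → ℕ) :
    Fml σ ι ar :=
  let k := ar i₀
  -- the guard `⋁ᵢ q = pᵢ` and its negation
  let guard : Fml σ ι ar := bigOrL ((List.finRange n).map fun i => veq q (p i))
  let nguard : Fml σ ι ar := bigAndL ((List.finRange n).map fun i => vne q (p i))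
  -- the condition `⋀_{j<i} q ≠ pⱼ ∧ q = pᵢ` and its negation
  let cond : Fin n → Fml σ ι ar := fun i =>
    bigAndL ((((List.finRange n).filter fun j => j < i).map fun j => vne q (p j)) ++
      [veq q (p i)])
  let ncond : Fin n → Fml σ ι ar := fun i =>
    bigOrL ((((List.finRange n).filter fun j => j < i).map fun j => veq q (p j)) ++
      [vne q (p i)])
  -- `z₀ z₁ = vᵢ wᵢ`
  let matchi : Fin n → Fml σ ι ar := fun i =>
    bigAndL (((List.finRange k).map fun t => veq (z₀ t) (v i t)) ++
      ((List.finRange k).map fun t => veq (z₁ t) (w i t)))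
  -- `z₀ = z₁` and its negation
  let zeq : Fml σ ι ar := bigAndL ((List.finRange k).map fun t => veq (z₀ t) (z₁ t))
  let zne : Fml σ ι ar := bigOrL ((List.finRange k).map fun t => vne (z₀ t) (z₁ t))
  let body : Fml σ ι ar :=
    Fml.and
      (bigAndL ((List.finRange n).map fun i =>
        Fml.or (ncond i) (Fml.and (cond i) (matchi i))))
      (Fml.or zne (Fml.and zeq (Fml.dep i₀ fun t => Tm.var (z₀ t))))
  alls ((List.finRange n).map p ++ [q])
    (exs ((List.finRange k).map z₀ ++ (List.finRange k).map z₁)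
      (Fml.or nguard (Fml.and guard body)))

/-- The list of fresh variables used by `depUnion`. -/
def duFresh (n k : ℕ) (p : Fin n → ℕ) (q : ℕ) (z₀ z₁ : Fin k → ℕ) : List ℕ :=
  (List.finRange n).map p ++ [q] ++ (List.finRange k).map z₀ ++ (List.finRange k).map z₁

/-- The list of the variables in the tuples `v i`, `w i`. -/
def vwList (n k : ℕ) (v w : Fin n → Fin k → ℕ) : List ℕ :=
  (List.finRange n).foldr
    (fun i acc => (List.finRange k).map (v i) ++ (List.finRange k).map (w i) ++ acc) []

/-- Apply a quantifier prefix (`true` = universal, `false` = existential) to a formula. -/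
def applyPrefix {σ : Sig} {ι : Type} {ar : ι → ℕ} (pre : List (Bool × ℕ))
    (φ : Fml σ ι ar) : Fml σ ι ar :=
  pre.foldr (fun bv acc => match bv with
    | (true, x) => Fml.all x acc
    | (false, x) => Fml.ex x acc) φ

lemma tsat_bigAndL {σ : Sig} {ι : Type} {ar : ι → ℕ} (𝒟 : ∀ i, DepOn (ar i)) {M : Type}
    (𝔐 : Struc σ M) (l : List (Fml σ ι ar)) (X : Team M) :
    Fml.TSat 𝒟 𝔐 (bigAndL l) X ↔ ∀ φ ∈ l, Fml.TSat 𝒟 𝔐 φ X := by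
  induction l with
  | nil => simp [bigAndL, Fml.TSat, Fml.verum]
  | cons a l ih =>
    simp only [bigAndL, List.foldr_cons, List.mem_cons] at *
    constructor
    · rintro ⟨h1, h2⟩ φ (rfl | hφ)
      · exact h1
      · exact ih.mp h2 φ hφ
    · intro h
      exact ⟨h a (Or.inl rfl), ih.mpr fun φ hφ => h φ (Or.inr hφ)⟩

lemma closed_world_key (k : ℕ) (D : DepOn k)
    (hiso : D.IsoClosed) (hcw : D.ClosedWorld) (M : Type) (Pset : M → Prop)
    (R : Set (Fin k → M)) (hP : ∀ xs ∈ R, ∀ i, Pset (xs i)) :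
    D M R ↔ D {m : M // Pset m} {xs | (fun i => (xs i : M)) ∈ R} := by
  set Pt := {m : M // Pset m}
  set R' : Set (Fin k → Pt) := {xs | (fun i => (xs i : M)) ∈ R} with hR'
  have hPm : ∀ m : {m : M // ∃ xs ∈ R, ∃ i, xs i = m}, Pset m.1 := by
    rintro ⟨m, xs, hxs, i, rfl⟩
    exact hP xs hxs i
  let e : {m : M // ∃ xs ∈ R, ∃ i, xs i = m} ≃
      {p : Pt // ∃ xs ∈ R', ∃ i, xs i = p} :=
    { toFun := fun m => ⟨⟨m.1, hPm m⟩, by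
        obtain ⟨m, xs, hxs, i, rfl⟩ := m
        exact ⟨fun j => ⟨xs j, hP xs hxs j⟩, hxs, i, Subtype.ext rfl⟩⟩
      invFun := fun p => ⟨p.1.1, by
        obtain ⟨xs, hxs, i, hi⟩ := p.2
        exact ⟨fun j => (xs j).1, hxs, i, congrArg Subtype.val hi⟩⟩
      left_inv := fun m => Subtype.ext rfl
      right_inv := fun p => Subtype.ext (Subtype.ext rfl) }
  have himg : (fun xs => (⇑e) ∘ xs) ''
      {xs : Fin k → {m : M // ∃ ys ∈ R, ∃ i, ys i = m} | (fun i => (xs i : M)) ∈ R} =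
      {xs : Fin k → {p : Pt // ∃ ys ∈ R', ∃ i, ys i = p} | (fun i => ((xs i : Pt) : M)) ∈ R} := by
    ext ys
    constructor
    · rintro ⟨xs, hxs, rfl⟩
      exact hxs
    · intro hys
      refine ⟨fun i => e.symm (ys i), hys, ?_⟩
      funext i
      simp [Function.comp]
  have himg2 : (fun xs => (⇑e.symm) ∘ xs) ''
      {xs : Fin k → {p : Pt // ∃ ys ∈ R', ∃ i, ys i = p} | (fun i => (xs i : Pt)) ∈ R'} =
      {xs : Fin k → {m : M // ∃ ys ∈ R, ∃ i, ys i = m} | (fun i => (xs i : M)) ∈ R} := by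
    ext ys
    constructor
    · rintro ⟨xs, hxs, rfl⟩
      exact hxs
    · intro hys
      refine ⟨fun i => e (ys i), hys, ?_⟩
      funext i
      simp
  have h1 := hcw M R
  have h2 := hcw Pt R'
  constructor
  · intro h
    apply h2.mpr
    have h0 := h1.mp h
    have := hiso _ _ e _ h0
    rw [himg] at this
    convert this using 2
    rfl
  · intro h
    apply h1.mpr
    have h0 := h2.mp h
    have := hiso _ _ e.symm _ h0
    rw [himg2] at this
    convert this using 2

/-- Every closed-world dependency is relativizable; in fact, the
relativized atom `D^P t` is equivalent to `(⋀ᵢ P tᵢ) ∧ D t`. -/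
theorem closed_world_relativizable (k : ℕ) (D : DepOn k)
    (hiso : D.IsoClosed) (hcw : D.ClosedWorld) :
    D.Relativizable ∧
    ∀ (σ : Sig) (P : σ.Rel 1) (t : Fin k → Tm σ)
      (M : Type) (𝔐 : Struc σ M) (X : Team M),
      Fml.TSat (fun _ : Unit => D) 𝔐
          (Fml.and (bigAndL ((List.finRange k).map fun i => Fml.rel 1 P fun _ => t i))
            (Fml.dep () t)) X ↔
        ((∀ s ∈ X, ∀ i, 𝔐.rel 1 P fun _ => (t i).eval 𝔐 s) ∧
          D {m : M // 𝔐.rel 1 P fun _ => m}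
            {xs | ∃ s ∈ X, (fun i => (xs i : M)) = fun i => (t i).eval 𝔐 s}) := by
  have main : ∀ (σ : Sig) (P : σ.Rel 1) (t : Fin k → Tm σ)
      (M : Type) (𝔐 : Struc σ M) (X : Team M),
      Fml.TSat (fun _ : Unit => D) 𝔐
          (Fml.and (bigAndL ((List.finRange k).map fun i => Fml.rel 1 P fun _ => t i))
            (Fml.dep () t)) X ↔
        ((∀ s ∈ X, ∀ i, 𝔐.rel 1 P fun _ => (t i).eval 𝔐 s) ∧
          D {m : M // 𝔐.rel 1 P fun _ => m}
            {xs | ∃ s ∈ X, (fun i => (xs i : M)) = fun i => (t i).eval 𝔐 s}) := by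
    intro σ P t M 𝔐 X
    have hAnd : Fml.TSat (fun _ : Unit => D) 𝔐
        (bigAndL ((List.finRange k).map fun i => Fml.rel 1 P fun _ => t i)) X ↔
        ∀ s ∈ X, ∀ i, 𝔐.rel 1 P fun _ => (t i).eval 𝔐 s := by
      rw [tsat_bigAndL]
      constructor
      · intro h s hs i
        exact h _ (List.mem_map_of_mem (List.mem_finRange i)) s hs
      · rintro h φ hφ
        simp only [List.mem_map] at hφ
        obtain ⟨i, -, rfl⟩ := hφ
        intro s hs
        exact h s hs i
    simp only [Fml.TSat, hAnd]
    constructor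
    · rintro ⟨h1, h2⟩
      refine ⟨h1, ?_⟩
      have hP : ∀ xs ∈ teamVals 𝔐 X t, ∀ i, 𝔐.rel 1 P fun _ => xs i := by
        rintro xs ⟨s, hs, rfl⟩ i
        exact h1 s hs i
      exact (closed_world_key k D hiso hcw M _ (teamVals 𝔐 X t) hP).mp h2
    · rintro ⟨h1, h2⟩
      refine ⟨h1, ?_⟩
      have hP : ∀ xs ∈ teamVals 𝔐 X t, ∀ i, 𝔐.rel 1 P fun _ => xs i := by
        rintro xs ⟨s, hs, rfl⟩ i
        exact h1 s hs i
      exact (closed_world_key k D hiso hcw M _ (teamVals 𝔐 X t) hP).mpr h2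
  refine ⟨?_, main⟩
  intro σ P t
  exact ⟨_, main σ P t⟩
end

section
/- Let φ be an FO(𝒟) formula where 𝒟 = {D₀, D₁, …} is a set of dependencies such that D₀ is downwards closed of arity k. Let S be a new k-ary relation symbol and let φ*(S) be obtained from φ by replacing a single occurrence D₀ t of the atom D₀ with S t. Then for all structures M whose signature contains that of φ and all teams X whose domain contains the free variables of φ: M ⊨_X φ if and only if there exists a relation S ⊆ M^k such that ⟨M,S⟩ ∈ D₀ and M ⊨_X φ*(S). -/
lemma eval_updRel {σ : Sig} {M : Type} (𝔐 : Struc σ M) {k : ℕ} (S : σ.Rel k)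
    (Q : Set (Fin k → M)) (s : ℕ → M) : ∀ t : Tm σ, t.eval (𝔐.updRel S Q) s = t.eval 𝔐 s
  | .var v => rfl
  | .app n f ts => by
      simp only [Tm.eval]
      exact congrArg _ (funext fun i => eval_updRel 𝔐 S Q s (ts i))

lemma teamVals_updRel {σ : Sig} {M : Type} (𝔐 : Struc σ M) {k : ℕ} (S : σ.Rel k)
    (Q : Set (Fin k → M)) (X : Team M) {m : ℕ} (t : Fin m → Tm σ) :
    teamVals (𝔐.updRel S Q) X t = teamVals 𝔐 X t := by
  simp [teamVals, eval_updRel]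

lemma updRel_rel_self {σ : Sig} {M : Type} (𝔐 : Struc σ M) {k : ℕ} (S : σ.Rel k)
    (Q : Set (Fin k → M)) (xs : Fin k → M) :
    (𝔐.updRel S Q).rel k S xs ↔ xs ∈ Q := by
  simp [Struc.updRel]

lemma updRel_rel_ne {σ : Sig} {M : Type} (𝔐 : Struc σ M) {k : ℕ} (S : σ.Rel k)
    (Q : Set (Fin k → M)) {n : ℕ} (R : σ.Rel n)
    (hne : (⟨n, R⟩ : Σ n, σ.Rel n) ≠ ⟨k, S⟩) (xs : Fin n → M) :
    (𝔐.updRel S Q).rel n R xs ↔ 𝔐.rel n R xs := by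
  simp [Struc.updRel, hne]

lemma tsat_updRel {σ : Sig} {ι : Type} {ar : ι → ℕ} (𝒟 : ∀ i, DepOn (ar i)) {M : Type}
    (𝔐 : Struc σ M) {k : ℕ} (S : σ.Rel k) (Q : Set (Fin k → M)) :
    ∀ ψ : Fml σ ι ar, Fml.countRel (⟨k, S⟩ : Σ n, σ.Rel n) ψ = 0 →
      ∀ X : Team M, (Fml.TSat 𝒟 (𝔐.updRel S Q) ψ X ↔ Fml.TSat 𝒟 𝔐 ψ X) := by
  intro ψ
  induction ψ with
  | eq t u => intro _ X; simp [Fml.TSat, eval_updRel]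
  | neq t u => intro _ X; simp [Fml.TSat, eval_updRel]
  | rel n R ts =>
      intro h X
      have hne : (⟨n, R⟩ : Σ n, σ.Rel n) ≠ ⟨k, S⟩ := by
        intro he; simp [Fml.countRel, he] at h
      simp only [Fml.TSat, eval_updRel]
      exact forall₂_congr fun s hs => updRel_rel_ne 𝔐 S Q R hne _
  | nrel n R ts =>
      intro h X
      have hne : (⟨n, R⟩ : Σ n, σ.Rel n) ≠ ⟨k, S⟩ := by
        intro he; simp [Fml.countRel, he] at h
      simp only [Fml.TSat, eval_updRel]
      exact forall₂_congr fun s hs => not_congr (updRel_rel_ne 𝔐 S Q R hne _)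
  | dep i ts => intro _ X; simp [Fml.TSat, teamVals_updRel]
  | and φ ψ ihφ ihψ =>
      intro h X
      have h' : Fml.countRel (⟨k, S⟩ : Σ n, σ.Rel n) φ = 0 ∧
          Fml.countRel (⟨k, S⟩ : Σ n, σ.Rel n) ψ = 0 := by
        simpa [Fml.countRel, Nat.add_eq_zero] using h
      simp [Fml.TSat, ihφ h'.1, ihψ h'.2]
  | or φ ψ ihφ ihψ =>
      intro h X
      have h' : Fml.countRel (⟨k, S⟩ : Σ n, σ.Rel n) φ = 0 ∧
          Fml.countRel (⟨k, S⟩ : Σ n, σ.Rel n) ψ = 0 := by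
        simpa [Fml.countRel, Nat.add_eq_zero] using h
      simp only [Fml.TSat]
      constructor
      · rintro ⟨Y, Z, hYZ, hY, hZ⟩
        exact ⟨Y, Z, hYZ, (ihφ h'.1 Y).mp hY, (ihψ h'.2 Z).mp hZ⟩
      · rintro ⟨Y, Z, hYZ, hY, hZ⟩
        exact ⟨Y, Z, hYZ, (ihφ h'.1 Y).mpr hY, (ihψ h'.2 Z).mpr hZ⟩
  | ex v φ ih =>
      intro h X
      simp only [Fml.TSat]
      constructor
      · rintro ⟨H, hH, hsat⟩; exact ⟨H, hH, (ih h _).mp hsat⟩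
      · rintro ⟨H, hH, hsat⟩; exact ⟨H, hH, (ih h _).mpr hsat⟩
  | all v φ ih =>
      intro h X
      simp only [Fml.TSat]
      exact ih h _

/-- Extracting a single occurrence of a downwards closed dependency
atom: if `φ*` is obtained from `φ` by replacing a single occurrence of the atom
`D₀ t` by `S t` for a new relation symbol `S`, then `φ` holds in a team iff there is
a relation `Q` with `⟨M, Q⟩ ∈ D₀` such that `φ*` holds with `S` interpreted as `Q`. -/
theorem extract_one_dependency (ι : Type) (ar : ι → ℕ) (𝒟 : ∀ i, DepOn (ar i))
    (hiso : ∀ i, (𝒟 i).IsoClosed)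
    (σ : Sig) (i₀ : ι) (hdown : (𝒟 i₀).DownClosed)
    (S : σ.Rel (ar i₀)) (φ φstar : Fml σ ι ar)
    (hrepl : ReplOne i₀ S φ φstar)
    (hnew : Fml.countRel (⟨ar i₀, S⟩ : Σ n, σ.Rel n) φ = 0)
    (M : Type) (𝔐 : Struc σ M) (X : Team M) :
    Fml.TSat 𝒟 𝔐 φ X ↔
      ∃ Q : Set (Fin (ar i₀) → M), 𝒟 i₀ M Q ∧
        Fml.TSat 𝒟 (𝔐.updRel S Q) φstar X := by
    induction hrepl generalizing X with
  | atom t =>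
      simp only [Fml.countRel] at hnew
      constructor
      · intro h
        refine ⟨teamVals 𝔐 X t, h, ?_⟩
        intro s hs
        show (𝔐.updRel S (teamVals 𝔐 X t)).rel (ar i₀) S _
        rw [updRel_rel_self]
        refine ⟨s, hs, ?_⟩
        funext i
        simp [eval_updRel]
      · rintro ⟨Q, hQ, hstar⟩
        refine hdown M Q (teamVals 𝔐 X t) hQ ?_
        rintro xs ⟨s, hs, rfl⟩
        have := (updRel_rel_self 𝔐 S Q _).mp (hstar s hs)
        simpa [eval_updRel] using this
  | andL hr ih =>
      rename_i φ φ' ψ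
      have h' : Fml.countRel (⟨ar i₀, S⟩ : Σ n, σ.Rel n) φ = 0 ∧
          Fml.countRel (⟨ar i₀, S⟩ : Σ n, σ.Rel n) ψ = 0 := by
        simpa [Fml.countRel, Nat.add_eq_zero] using hnew
      simp only [Fml.TSat]
      constructor
      · rintro ⟨h1, h2⟩
        obtain ⟨Q, hQ, h1'⟩ := (ih h'.1 X).mp h1
        exact ⟨Q, hQ, h1', (tsat_updRel 𝒟 𝔐 S Q ψ h'.2 X).mpr h2⟩
      · rintro ⟨Q, hQ, h1', h2'⟩
        exact ⟨(ih h'.1 X).mpr ⟨Q, hQ, h1'⟩, (tsat_updRel 𝒟 𝔐 S Q ψ h'.2 X).mp h2'⟩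
  | andR hr ih =>
      rename_i φ ψ ψ'
      have h' : Fml.countRel (⟨ar i₀, S⟩ : Σ n, σ.Rel n) φ = 0 ∧
          Fml.countRel (⟨ar i₀, S⟩ : Σ n, σ.Rel n) ψ = 0 := by
        simpa [Fml.countRel, Nat.add_eq_zero] using hnew
      simp only [Fml.TSat]
      constructor
      · rintro ⟨h1, h2⟩
        obtain ⟨Q, hQ, h2'⟩ := (ih h'.2 X).mp h2
        exact ⟨Q, hQ, (tsat_updRel 𝒟 𝔐 S Q φ h'.1 X).mpr h1, h2'⟩
      · rintro ⟨Q, hQ, h1', h2'⟩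
        exact ⟨(tsat_updRel 𝒟 𝔐 S Q φ h'.1 X).mp h1', (ih h'.2 X).mpr ⟨Q, hQ, h2'⟩⟩
  | orL hr ih =>
      rename_i φ φ' ψ
      have h' : Fml.countRel (⟨ar i₀, S⟩ : Σ n, σ.Rel n) φ = 0 ∧
          Fml.countRel (⟨ar i₀, S⟩ : Σ n, σ.Rel n) ψ = 0 := by
        simpa [Fml.countRel, Nat.add_eq_zero] using hnew
      simp only [Fml.TSat]
      constructor
      · rintro ⟨Y, Z, hYZ, hY, hZ⟩
        obtain ⟨Q, hQ, hY'⟩ := (ih h'.1 Y).mp hY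
        exact ⟨Q, hQ, Y, Z, hYZ, hY', (tsat_updRel 𝒟 𝔐 S Q ψ h'.2 Z).mpr hZ⟩
      · rintro ⟨Q, hQ, Y, Z, hYZ, hY', hZ'⟩
        exact ⟨Y, Z, hYZ, (ih h'.1 Y).mpr ⟨Q, hQ, hY'⟩,
          (tsat_updRel 𝒟 𝔐 S Q ψ h'.2 Z).mp hZ'⟩
  | orR hr ih =>
      rename_i φ ψ ψ'
      have h' : Fml.countRel (⟨ar i₀, S⟩ : Σ n, σ.Rel n) φ = 0 ∧
          Fml.countRel (⟨ar i₀, S⟩ : Σ n, σ.Rel n) ψ = 0 := by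
        simpa [Fml.countRel, Nat.add_eq_zero] using hnew
      simp only [Fml.TSat]
      constructor
      · rintro ⟨Y, Z, hYZ, hY, hZ⟩
        obtain ⟨Q, hQ, hZ'⟩ := (ih h'.2 Z).mp hZ
        exact ⟨Q, hQ, Y, Z, hYZ, (tsat_updRel 𝒟 𝔐 S Q φ h'.1 Y).mpr hY, hZ'⟩
      · rintro ⟨Q, hQ, Y, Z, hYZ, hY', hZ'⟩
        exact ⟨Y, Z, hYZ, (tsat_updRel 𝒟 𝔐 S Q φ h'.1 Y).mp hY',
          (ih h'.2 Z).mpr ⟨Q, hQ, hZ'⟩⟩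
  | exC hr ih =>
      simp only [Fml.countRel] at hnew
      simp only [Fml.TSat]
      constructor
      · rintro ⟨H, hH, hsat⟩
        obtain ⟨Q, hQ, hsat'⟩ := (ih hnew _).mp hsat
        exact ⟨Q, hQ, H, hH, hsat'⟩
      · rintro ⟨Q, hQ, H, hH, hsat'⟩
        exact ⟨H, hH, (ih hnew _).mpr ⟨Q, hQ, hsat'⟩⟩
  | allC hr ih =>
      simp only [Fml.countRel] at hnew
      simp only [Fml.TSat]
      exact ih hnew _
end

section
/- Let D be a dependency of arity k, let v₁,…,vₙ and w₁,…,wₙ be tuples of variables of length k, and let D_∪(v₁…vₙ; w₁…wₙ) be the FO(D) formula ∀p₁…pₙ∀q∃z₀z₁((⋁ᵢ q=pᵢ) ↪ (⋀_{i≤n}((⋀_{j<i} q≠pⱼ ∧ q=pᵢ) ↪ z₀z₁ = vᵢwᵢ) ∧ (z₀=z₁ ↪ D z₀))), where p₁…pₙ, q are new distinct variables and z₀, z₁ are tuples of new variables of length k. Then for all suitable structures M with at least two elements and all teams X: M ⊨_X D_∪(v₁…vₙ; w₁…wₙ) if and only if ⟨M, ⋃_{i=1}^n Wᵢ⟩ ∈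 D, where Wᵢ = {s(vᵢ) : s ∈ X, s(vᵢ) = s(wᵢ)}. -/
namespace DepUnionProof
open Fml

variable {σ : Sig} {ι : Type} {ar : ι → ℕ}

section Flat
variable (𝒟 : ∀ i, DepOn (ar i)) {M : Type} (𝔐 : Struc σ M)

/-- A formula is flat if its team satisfaction reduces to singletons. -/
def IsFlat (φ : Fml σ ι ar) : Prop :=
  ∀ X : Team M, φ.TSat 𝒟 𝔐 X ↔ ∀ s ∈ X, φ.TSat 𝒟 𝔐 {s}

variable {𝒟 𝔐}

theorem tsat_veq {a b : ℕ} {X : Team M} :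
    (veq a b : Fml σ ι ar).TSat 𝒟 𝔐 X ↔ ∀ s ∈ X, s a = s b := Iff.rfl

theorem tsat_vne {a b : ℕ} {X : Team M} :
    (vne a b : Fml σ ι ar).TSat 𝒟 𝔐 X ↔ ∀ s ∈ X, s a ≠ s b := Iff.rfl

theorem tsat_veq_single {a b : ℕ} {s : ℕ → M} :
    (veq a b : Fml σ ι ar).TSat 𝒟 𝔐 {s} ↔ s a = s b := by
  simp [tsat_veq]

theorem tsat_vne_single {a b : ℕ} {s : ℕ → M} :
    (vne a b : Fml σ ι ar).TSat 𝒟 𝔐 {s} ↔ s a ≠ s b := by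
  simp [tsat_vne]

theorem flat_veq {a b : ℕ} : IsFlat 𝒟 𝔐 (veq a b : Fml σ ι ar) := by
  intro X; simp [tsat_veq, tsat_veq_single]

theorem flat_vne {a b : ℕ} : IsFlat 𝒟 𝔐 (vne a b : Fml σ ι ar) := by
  intro X; simp [tsat_vne, tsat_vne_single]

theorem tsat_verum {X : Team M} : (Fml.verum : Fml σ ι ar).TSat 𝒟 𝔐 X := by
  intro s _; rfl

theorem tsat_falsum {X : Team M} :
    (Fml.falsum : Fml σ ι ar).TSat 𝒟 𝔐 X ↔ ∀ s ∈ X, False := by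
  constructor
  · intro h s hs; exact h s hs rfl
  · intro h s hs; exact (h s hs).elim

theorem flat_falsum : IsFlat 𝒟 𝔐 (Fml.falsum : Fml σ ι ar) := by
  intro X; simp [tsat_falsum]

theorem IsFlat.single {φ : Fml σ ι ar} (h : IsFlat 𝒟 𝔐 φ) {X : Team M}
    (hX : φ.TSat 𝒟 𝔐 X) {s : ℕ → M} (hs : s ∈ X) : φ.TSat 𝒟 𝔐 {s} :=
  (h X).1 hX s hs

theorem flat_empty {φ : Fml σ ι ar} (h : IsFlat 𝒟 𝔐 φ) : φ.TSat 𝒟 𝔐 (∅ : Team M) := by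
  rw [h]; intro s hs; exact hs.elim

theorem tsat_and {φ ψ : Fml σ ι ar} {X : Team M} :
    (φ.and ψ).TSat 𝒟 𝔐 X ↔ φ.TSat 𝒟 𝔐 X ∧ ψ.TSat 𝒟 𝔐 X := Iff.rfl

theorem flat_and {φ ψ : Fml σ ι ar} (hφ : IsFlat 𝒟 𝔐 φ) (hψ : IsFlat 𝒟 𝔐 ψ) :
    IsFlat 𝒟 𝔐 (φ.and ψ) := by
  intro X
  simp only [tsat_and, hφ X, hψ X]
  constructor
  · rintro ⟨h1, h2⟩ s hs
    exact ⟨(hφ {s}).2 (by simpa using h1 s hs), (hψ {s}).2 (by simpa using h2 s hs)⟩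
  · intro h
    constructor
    · intro s hs; exact ((hφ {s}).1 (h s hs).1) s rfl
    · intro s hs; exact ((hψ {s}).1 (h s hs).2) s rfl

theorem tsat_or_flat {φ ψ : Fml σ ι ar} (hφ : IsFlat 𝒟 𝔐 φ) (hψ : IsFlat 𝒟 𝔐 ψ)
    {X : Team M} :
    (φ.or ψ).TSat 𝒟 𝔐 X ↔ ∀ s ∈ X, φ.TSat 𝒟 𝔐 {s} ∨ ψ.TSat 𝒟 𝔐 {s} := by
  constructor
  · rintro ⟨Y, Z, hXYZ, hY, hZ⟩ s hs
    rcases (hXYZ ▸ hs : s ∈ Y ∪ Z) with h | h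
    · exact Or.inl (hφ.single hY h)
    · exact Or.inr (hψ.single hZ h)
  · intro h
    refine ⟨{s ∈ X | φ.TSat 𝒟 𝔐 {s}}, {s ∈ X | ψ.TSat 𝒟 𝔐 {s}}, ?_, ?_, ?_⟩
    · ext s
      simp only [Set.mem_union, Set.mem_setOf_eq]
      constructor
      · intro hs; rcases h s hs with h' | h'
        exacts [Or.inl ⟨hs, h'⟩, Or.inr ⟨hs, h'⟩]
      · rintro (⟨hs, _⟩ | ⟨hs, _⟩) <;> exact hs
    · exact (hφ _).2 fun s hs => hs.2
    · exact (hψ _).2 fun s hs => hs.2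

theorem flat_or {φ ψ : Fml σ ι ar} (hφ : IsFlat 𝒟 𝔐 φ) (hψ : IsFlat 𝒟 𝔐 ψ) :
    IsFlat 𝒟 𝔐 (φ.or ψ) := by
  intro X
  rw [tsat_or_flat hφ hψ]
  constructor
  · intro h s hs
    rw [tsat_or_flat hφ hψ]
    intro t ht
    rw [Set.mem_singleton_iff] at ht
    exact ht ▸ h s hs
  · intro h s hs
    exact (tsat_or_flat hφ hψ).1 (h s hs) s rfl

theorem tsat_bigAndL {l : List (Fml σ ι ar)} {X : Team M} :
    (bigAndL l).TSat 𝒟 𝔐 X ↔ ∀ φ ∈ l, φ.TSat 𝒟 𝔐 X := by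
  induction l with
  | nil => simpa [bigAndL] using tsat_verum
  | cons φ l ih =>
    simp only [bigAndL, List.foldr_cons]
    rw [show (List.foldr Fml.and Fml.verum l) = bigAndL l from rfl]
    simp [tsat_and, ih]

theorem flat_bigAndL {l : List (Fml σ ι ar)} (h : ∀ φ ∈ l, IsFlat 𝒟 𝔐 φ) :
    IsFlat 𝒟 𝔐 (bigAndL l) := by
  induction l with
  | nil =>
    intro X
    exact iff_of_true tsat_verum fun s _ => tsat_verum
  | cons φ l ih =>
    exact flat_and (h φ (by simp)) (ih fun ψ hψ => h ψ (by simp [hψ]))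

theorem flat_bigOrL {l : List (Fml σ ι ar)} (h : ∀ φ ∈ l, IsFlat 𝒟 𝔐 φ) :
    IsFlat 𝒟 𝔐 (bigOrL l) := by
  induction l with
  | nil => exact flat_falsum
  | cons φ l ih =>
    exact flat_or (h φ (by simp)) (ih fun ψ hψ => h ψ (by simp [hψ]))

theorem tsat_bigOrL_flat {l : List (Fml σ ι ar)} (h : ∀ φ ∈ l, IsFlat 𝒟 𝔐 φ)
    {X : Team M} :
    (bigOrL l).TSat 𝒟 𝔐 X ↔ ∀ s ∈ X, ∃ φ ∈ l, φ.TSat 𝒟 𝔐 {s} := by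
  induction l generalizing X with
  | nil => simp [bigOrL, tsat_falsum]
  | cons φ l ih =>
    have hl : ∀ ψ ∈ l, IsFlat 𝒟 𝔐 ψ := fun ψ hψ => h ψ (by simp [hψ])
    rw [show bigOrL (φ :: l) = φ.or (bigOrL l) from rfl,
      tsat_or_flat (h φ (by simp)) (flat_bigOrL hl)]
    constructor
    · intro h' s hs
      rcases h' s hs with h'' | h''
      · exact ⟨φ, by simp, h''⟩
      · rcases ((ih hl).1 h'') s rfl with ⟨ψ, hψ, hψ'⟩
        exact ⟨ψ, by simp [hψ], hψ'⟩
    · intro h' s hs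
      rcases h' s hs with ⟨ψ, hψ, hψ'⟩
      rcases List.mem_cons.1 hψ with rfl | hψ
      · exact Or.inl hψ'
      · refine Or.inr ((ih hl).2 ?_)
        intro t ht
        rw [Set.mem_singleton_iff] at ht
        exact ht ▸ ⟨ψ, hψ, hψ'⟩

end Flat
end DepUnionProof
namespace DepUnionProof
open Fml

variable {σ : Sig} {ι : Type} {ar : ι → ℕ} {𝒟 : ∀ i, DepOn (ar i)} {M : Type}
  {𝔐 : Struc σ M}

theorem allsSat {vs : List ℕ} {φ : Fml σ ι ar} {X : Team M} :
    (alls vs φ).TSat 𝒟 𝔐 X ↔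
      φ.TSat 𝒟 𝔐 ({s' | ∃ s ∈ X, ∀ x, x ∉ vs → s' x = s x} : Team M) := by
  induction vs generalizing X with
  | nil =>
    have h : ({s' | ∃ s ∈ X, ∀ x, x ∉ ([] : List ℕ) → s' x = s x} : Team M) = X := by
      ext s'
      constructor
      · rintro ⟨s, hs, h⟩
        have hss : s' = s := funext fun x => h x (by simp)
        rwa [hss]
      · intro h
        exact ⟨s', h, fun x _ => rfl⟩
    rw [show alls [] φ = φ from rfl, h]
  | cons v vs ih =>
    rw [show alls (v :: vs) φ = Fml.all v (alls vs φ) from rfl,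
      show (Fml.all v (alls vs φ)).TSat 𝒟 𝔐 X ↔ (alls vs φ).TSat 𝒟 𝔐 (teamDup X v)
        from Iff.rfl, ih]
    have h : ({s' | ∃ s ∈ teamDup X v, ∀ x, x ∉ vs → s' x = s x} : Team M)
        = {s' | ∃ s ∈ X, ∀ x, x ∉ (v :: vs) → s' x = s x} := by
      ext s'
      constructor
      · rintro ⟨s₁, ⟨s, hs, m, _, rfl⟩, hag⟩
        refine ⟨s, hs, fun x hx => ?_⟩
        have hxv : x ≠ v := fun h => hx (by simp [h])
        have hxvs : x ∉ vs := fun h => hx (by simp [h])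
        rw [hag x hxvs, Function.update_of_ne hxv]
      · rintro ⟨s, hs, hag⟩
        refine ⟨Function.update s v (s' v), ⟨s, hs, s' v, Set.mem_univ _, rfl⟩,
          fun x hx => ?_⟩
        by_cases hxv : x = v
        · subst hxv; simp
        · rw [Function.update_of_ne hxv]
          exact hag x (by simp [hxv, hx])
    rw [h]

theorem exsSat {vs : List ℕ} {φ : Fml σ ι ar} {X : Team M} :
    (exs vs φ).TSat 𝒟 𝔐 X ↔
      ∃ Z : Team M, φ.TSat 𝒟 𝔐 Z ∧
        (∀ s' ∈ Z, ∃ s ∈ X, ∀ x, x ∉ vs → s' x = s x) ∧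
        (∀ s ∈ X, ∃ s' ∈ Z, ∀ x, x ∉ vs → s' x = s x) := by
  induction vs generalizing X with
  | nil =>
    rw [show exs [] φ = φ from rfl]
    constructor
    · intro h
      exact ⟨X, h, fun s hs => ⟨s, hs, fun _ _ => rfl⟩, fun s hs => ⟨s, hs, fun _ _ => rfl⟩⟩
    · rintro ⟨Z, hZ, h1, h2⟩
      have hZX : Z = X := by
        ext s'
        constructor
        · intro hs'
          rcases h1 s' hs' with ⟨s, hs, hag⟩
          have : s' = s := funext fun x => hag x (by simp)
          rwa [this]
        · intro hs'
          rcases h2 s' hs' with ⟨s'', hs'', hag⟩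
          have : s'' = s' := funext fun x => hag x (by simp)
          rwa [this] at hs''
      exact hZX ▸ hZ
  | cons v vs ih =>
    rw [show exs (v :: vs) φ = Fml.ex v (exs vs φ) from rfl]
    constructor
    · rintro ⟨H, hH, hsat⟩
      rcases ih.1 hsat with ⟨Z, hZ, h1, h2⟩
      refine ⟨Z, hZ, ?_, ?_⟩
      · intro s' hs'
        rcases h1 s' hs' with ⟨s₁, ⟨s, hs, m, _, rfl⟩, hag⟩
        refine ⟨s, hs, fun x hx => ?_⟩
        have hxv : x ≠ v := fun h => hx (by simp [h])
        have hxvs : x ∉ vs := fun h => hx (by simp [h])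
        rw [hag x hxvs, Function.update_of_ne hxv]
      · intro s hs
        rcases hH s hs with ⟨m, hm⟩
        rcases h2 (Function.update s v m) ⟨s, hs, m, hm, rfl⟩ with ⟨s', hs', hag⟩
        refine ⟨s', hs', fun x hx => ?_⟩
        have hxv : x ≠ v := fun h => hx (by simp [h])
        have hxvs : x ∉ vs := fun h => hx (by simp [h])
        rw [hag x hxvs, Function.update_of_ne hxv]
    · rintro ⟨Z, hZ, h1, h2⟩
      refine ⟨fun s => {m | ∃ s'' ∈ Z, (∀ x, x ∉ (v :: vs) → s'' x = s x) ∧ m = s'' v},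
        ?_, ?_⟩
      · intro s hs
        rcases h2 s hs with ⟨s'', hs'', hag⟩
        exact ⟨s'' v, s'', hs'', hag, rfl⟩
      · apply ih.2
        refine ⟨Z, hZ, ?_, ?_⟩
        · intro s'' hs''
          rcases h1 s'' hs'' with ⟨s, hs, hag⟩
          refine ⟨Function.update s v (s'' v), ⟨s, hs, s'' v, ⟨s'', hs'', hag, rfl⟩, rfl⟩,
            fun x hx => ?_⟩
          by_cases hxv : x = v
          · subst hxv; simp
          · rw [Function.update_of_ne hxv]
            exact hag x (by simp [hxv, hx])
        · rintro s₁ ⟨s, hs, m, ⟨s'', hs'', hag, rfl⟩, rfl⟩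
          refine ⟨s'', hs'', fun x hx => ?_⟩
          by_cases hxv : x = v
          · subst hxv; simp
          · rw [Function.update_of_ne hxv]
            exact hag x (by simp [hxv, hx])

end DepUnionProof
namespace DepUnionProof
open Fml

section Defs
variable {σ : Sig} {ι : Type} {ar : ι → ℕ} (i₀ : ι) (n : ℕ)
  (v w : Fin n → Fin (ar i₀) → ℕ) (p : Fin n → ℕ) (q : ℕ) (z₀ z₁ : Fin (ar i₀) → ℕ)

def guardF : Fml σ ι ar := bigOrL ((List.finRange n).map fun i => veq q (p i))

def nguardF : Fml σ ι ar := bigAndL ((List.finRange n).map fun i => vne q (p i))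

def condF (i : Fin n) : Fml σ ι ar :=
  bigAndL ((((List.finRange n).filter fun j => j < i).map fun j => vne q (p j)) ++
    [veq q (p i)])

def ncondF (i : Fin n) : Fml σ ι ar :=
  bigOrL ((((List.finRange n).filter fun j => j < i).map fun j => veq q (p j)) ++
    [vne q (p i)])

def matchiF (i : Fin n) : Fml σ ι ar :=
  bigAndL (((List.finRange (ar i₀)).map fun t => veq (z₀ t) (v i t)) ++
    ((List.finRange (ar i₀)).map fun t => veq (z₁ t) (w i t)))

def zeqF : Fml σ ι ar := bigAndL ((List.finRange (ar i₀)).map fun t => veq (z₀ t) (z₁ t))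

def zneF : Fml σ ι ar := bigOrL ((List.finRange (ar i₀)).map fun t => vne (z₀ t) (z₁ t))

def C1F : Fml σ ι ar :=
  bigAndL ((List.finRange n).map fun i =>
    Fml.or (ncondF n p q i) (Fml.and (condF n p q i) (matchiF i₀ n v w z₀ z₁ i)))

def C2F : Fml σ ι ar :=
  Fml.or (zneF i₀ z₀ z₁) (Fml.and (zeqF i₀ z₀ z₁) (Fml.dep i₀ fun t => Tm.var (z₀ t)))

theorem depUnion_eq :
    (depUnion i₀ n v w p q z₀ z₁ : Fml σ ι ar) =
      alls ((List.finRange n).map p ++ [q])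
        (exs ((List.finRange (ar i₀)).map z₀ ++ (List.finRange (ar i₀)).map z₁)
          (Fml.or (nguardF n p q)
            (Fml.and (guardF n p q)
              (Fml.and (C1F i₀ n v w p q z₀ z₁) (C2F i₀ z₀ z₁))))) := rfl

end Defs
end DepUnionProof
namespace DepUnionProof
open Fml

section Char
variable {σ : Sig} {ι : Type} {ar : ι → ℕ} {𝒟 : ∀ i, DepOn (ar i)} {M : Type}
  {𝔐 : Struc σ M} {i₀ : ι} {n : ℕ}
  {v w : Fin n → Fin (ar i₀) → ℕ} {p : Fin n → ℕ} {q : ℕ} {z₀ z₁ : Fin (ar i₀) → ℕ}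

theorem tsat_nguardF {W : Team M} :
    (nguardF n p q : Fml σ ι ar).TSat 𝒟 𝔐 W ↔ ∀ s ∈ W, ∀ i : Fin n, s q ≠ s (p i) := by
  rw [nguardF, tsat_bigAndL]
  constructor
  · intro h s hs i
    exact h (vne q (p i)) (List.mem_map_of_mem (List.mem_finRange i)) s hs
  · rintro h φ hφ
    rcases List.mem_map.1 hφ with ⟨i, -, rfl⟩
    intro s hs
    exact h s hs i

theorem tsat_guardF {W : Team M} :
    (guardF n p q : Fml σ ι ar).TSat 𝒟 𝔐 W ↔ ∀ s ∈ W, ∃ i : Fin n, s q = s (p i) := by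
  rw [guardF, tsat_bigOrL_flat]
  · constructor
    · intro h s hs
      rcases h s hs with ⟨φ, hφ, hsat⟩
      rcases List.mem_map.1 hφ with ⟨i, -, rfl⟩
      exact ⟨i, tsat_veq_single.1 hsat⟩
    · intro h s hs
      rcases h s hs with ⟨i, hi⟩
      exact ⟨veq q (p i), List.mem_map_of_mem (List.mem_finRange i),
        tsat_veq_single.2 hi⟩
  · rintro φ hφ
    rcases List.mem_map.1 hφ with ⟨i, -, rfl⟩
    exact flat_veq

theorem flat_ncondF {i : Fin n} : IsFlat 𝒟 𝔐 (ncondF n p q i : Fml σ ι ar) := by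
  refine flat_bigOrL fun φ hφ => ?_
  rcases List.mem_append.1 hφ with h | h
  · rcases List.mem_map.1 h with ⟨j, -, rfl⟩
    exact flat_veq
  · rcases List.mem_singleton.1 h with rfl
    exact flat_vne

theorem flat_condF {i : Fin n} : IsFlat 𝒟 𝔐 (condF n p q i : Fml σ ι ar) := by
  refine flat_bigAndL fun φ hφ => ?_
  rcases List.mem_append.1 hφ with h | h
  · rcases List.mem_map.1 h with ⟨j, -, rfl⟩
    exact flat_vne
  · rcases List.mem_singleton.1 h with rfl
    exact flat_veq

theorem flat_matchiF {i : Fin n} : IsFlat 𝒟 𝔐 (matchiF i₀ n v w z₀ z₁ i : Fml σ ι ar) := by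
  refine flat_bigAndL fun φ hφ => ?_
  rcases List.mem_append.1 hφ with h | h <;>
    · rcases List.mem_map.1 h with ⟨t, -, rfl⟩
      exact flat_veq

theorem tsat_ncondF_single {i : Fin n} {s : ℕ → M} :
    (ncondF n p q i : Fml σ ι ar).TSat 𝒟 𝔐 {s} ↔
      (∃ j : Fin n, j < i ∧ s q = s (p j)) ∨ s q ≠ s (p i) := by
  rw [ncondF, tsat_bigOrL_flat]
  · simp only [Set.mem_singleton_iff, forall_eq]
    constructor
    · rintro ⟨φ, hφ, hsat⟩
      rcases List.mem_append.1 hφ with h | h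
      · rcases List.mem_map.1 h with ⟨j, hj, rfl⟩
        rcases List.mem_filter.1 hj with ⟨-, hj'⟩
        exact Or.inl ⟨j, of_decide_eq_true hj', tsat_veq_single.1 hsat⟩
      · rcases List.mem_singleton.1 h with rfl
        exact Or.inr (tsat_vne_single.1 hsat)
    · rintro (⟨j, hj, hsat⟩ | hne)
      · exact ⟨veq q (p j), List.mem_append.2 (Or.inl (List.mem_map_of_mem
          (List.mem_filter.2 ⟨List.mem_finRange j, decide_eq_true hj⟩))),
          tsat_veq_single.2 hsat⟩
      · exact ⟨vne q (p i), List.mem_append.2 (Or.inr (List.mem_singleton.2 rfl)),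
          tsat_vne_single.2 hne⟩
  · intro φ hφ
    rcases List.mem_append.1 hφ with h | h
    · rcases List.mem_map.1 h with ⟨j, -, rfl⟩
      exact flat_veq
    · rcases List.mem_singleton.1 h with rfl
      exact flat_vne

theorem tsat_condF_single {i : Fin n} {s : ℕ → M} :
    (condF n p q i : Fml σ ι ar).TSat 𝒟 𝔐 {s} ↔
      (∀ j : Fin n, j < i → s q ≠ s (p j)) ∧ s q = s (p i) := by
  rw [condF, tsat_bigAndL]
  constructor
  · intro h
    refine ⟨fun j hj => ?_, ?_⟩
    · exact tsat_vne_single.1 (h (vne q (p j)) (List.mem_append.2 (Or.inl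
        (List.mem_map_of_mem (List.mem_filter.2
          ⟨List.mem_finRange j, decide_eq_true hj⟩)))))
    · exact tsat_veq_single.1 (h (veq q (p i)) (List.mem_append.2
        (Or.inr (List.mem_singleton.2 rfl))))
  · rintro ⟨h1, h2⟩ φ hφ
    rcases List.mem_append.1 hφ with h | h
    · rcases List.mem_map.1 h with ⟨j, hj, rfl⟩
      rcases List.mem_filter.1 hj with ⟨-, hj'⟩
      exact tsat_vne_single.2 (h1 j (of_decide_eq_true hj'))
    · rcases List.mem_singleton.1 h with rfl
      exact tsat_veq_single.2 h2

theorem tsat_matchiF_single {i : Fin n} {s : ℕ → M} :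
    (matchiF i₀ n v w z₀ z₁ i : Fml σ ι ar).TSat 𝒟 𝔐 {s} ↔
      (∀ t, s (z₀ t) = s (v i t)) ∧ ∀ t, s (z₁ t) = s (w i t) := by
  rw [matchiF, tsat_bigAndL]
  constructor
  · intro h
    refine ⟨fun t => ?_, fun t => ?_⟩
    · exact tsat_veq_single.1 (h (veq (z₀ t) (v i t)) (List.mem_append.2 (Or.inl
        (List.mem_map_of_mem (List.mem_finRange t)))))
    · exact tsat_veq_single.1 (h (veq (z₁ t) (w i t)) (List.mem_append.2 (Or.inr
        (List.mem_map_of_mem (List.mem_finRange t)))))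
  · rintro ⟨h1, h2⟩ φ hφ
    rcases List.mem_append.1 hφ with h | h <;> rcases List.mem_map.1 h with ⟨t, -, rfl⟩
    · exact tsat_veq_single.2 (h1 t)
    · exact tsat_veq_single.2 (h2 t)

theorem tsat_C1F {W : Team M} :
    (C1F i₀ n v w p q z₀ z₁ : Fml σ ι ar).TSat 𝒟 𝔐 W ↔ ∀ s ∈ W, ∀ i : Fin n,
      ((∃ j : Fin n, j < i ∧ s q = s (p j)) ∨ s q ≠ s (p i)) ∨
      (((∀ j : Fin n, j < i → s q ≠ s (p j)) ∧ s q = s (p i)) ∧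
        ((∀ t, s (z₀ t) = s (v i t)) ∧ ∀ t, s (z₁ t) = s (w i t))) := by
  rw [C1F, tsat_bigAndL]
  have key : ∀ (i : Fin n) (W : Team M),
      (Fml.or (ncondF n p q i)
        (Fml.and (condF n p q i) (matchiF i₀ n v w z₀ z₁ i)) : Fml σ ι ar).TSat 𝒟 𝔐 W ↔
      ∀ s ∈ W,
        ((∃ j : Fin n, j < i ∧ s q = s (p j)) ∨ s q ≠ s (p i)) ∨
        (((∀ j : Fin n, j < i → s q ≠ s (p j)) ∧ s q = s (p i)) ∧
          ((∀ t, s (z₀ t) = s (v i t)) ∧ ∀ t, s (z₁ t) = s (w i t))) := by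
    intro i W
    rw [tsat_or_flat flat_ncondF (flat_and flat_condF flat_matchiF)]
    refine forall₂_congr fun s _ => ?_
    rw [tsat_ncondF_single, tsat_and, tsat_condF_single, tsat_matchiF_single]
  constructor
  · intro h s hs i
    exact (key i W).1 (h _ (List.mem_map_of_mem (List.mem_finRange i))) s hs
  · intro h φ hφ
    rcases List.mem_map.1 hφ with ⟨i, -, rfl⟩
    exact (key i W).2 fun s hs => h s hs i

theorem tsat_zneF {W : Team M} :
    (zneF i₀ z₀ z₁ : Fml σ ι ar).TSat 𝒟 𝔐 W ↔ ∀ s ∈ W, ∃ t, s (z₀ t) ≠ s (z₁ t) := by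
  rw [zneF, tsat_bigOrL_flat]
  · constructor
    · intro h s hs
      rcases h s hs with ⟨φ, hφ, hsat⟩
      rcases List.mem_map.1 hφ with ⟨t, -, rfl⟩
      exact ⟨t, tsat_vne_single.1 hsat⟩
    · intro h s hs
      rcases h s hs with ⟨t, ht⟩
      exact ⟨vne (z₀ t) (z₁ t), List.mem_map_of_mem (List.mem_finRange t),
        tsat_vne_single.2 ht⟩
  · rintro φ hφ
    rcases List.mem_map.1 hφ with ⟨t, -, rfl⟩
    exact flat_vne

theorem tsat_zeqF {W : Team M} :
    (zeqF i₀ z₀ z₁ : Fml σ ι ar).TSat 𝒟 𝔐 W ↔ ∀ s ∈ W, ∀ t, s (z₀ t) = s (z₁ t) := by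
  rw [zeqF, tsat_bigAndL]
  constructor
  · intro h s hs t
    exact h (veq (z₀ t) (z₁ t)) (List.mem_map_of_mem (List.mem_finRange t)) s hs
  · intro h φ hφ
    rcases List.mem_map.1 hφ with ⟨t, -, rfl⟩
    intro s hs
    exact h s hs t

theorem tsat_C2F {W : Team M} :
    (C2F i₀ z₀ z₁ : Fml σ ι ar).TSat 𝒟 𝔐 W ↔ ∃ A B : Team M, W = A ∪ B ∧
      (∀ s ∈ A, ∃ t, s (z₀ t) ≠ s (z₁ t)) ∧
      (∀ s ∈ B, ∀ t, s (z₀ t) = s (z₁ t)) ∧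
      𝒟 i₀ M {xs | ∃ s ∈ B, xs = fun t => s (z₀ t)} := by
  have hvals : ∀ B : Team M,
      teamVals 𝔐 B (fun t => (Tm.var (z₀ t) : Tm σ)) =
        {xs | ∃ s ∈ B, xs = fun t => s (z₀ t)} := fun B => rfl
  constructor
  · rintro ⟨A, B, rfl, hA, hB, hD⟩
    have hD' : 𝒟 i₀ M (teamVals 𝔐 B (fun t => (Tm.var (z₀ t) : Tm σ))) := hD
    rw [hvals B] at hD'
    exact ⟨A, B, rfl, tsat_zneF.1 hA, tsat_zeqF.1 hB, hD'⟩
  · rintro ⟨A, B, rfl, hA, hB, hD⟩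
    refine ⟨A, B, rfl, tsat_zneF.2 hA, ⟨tsat_zeqF.2 hB, ?_⟩⟩
    show 𝒟 i₀ M (teamVals 𝔐 B (fun t => (Tm.var (z₀ t) : Tm σ)))
    rw [hvals B]
    exact hD

end Char
end DepUnionProof
namespace DepUnionProof

theorem exists_min_fin {n : ℕ} (P : Fin n → Prop) (h : ∃ i, P i) :
    ∃ i, P i ∧ ∀ j, j < i → ¬ P j := by
  classical
  obtain ⟨i, hi⟩ := h
  have h' : ∃ m, ∃ hm : m < n, P ⟨m, hm⟩ := ⟨i, i.2, by simpa using hi⟩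
  obtain ⟨hm, hPm⟩ := Nat.find_spec h'
  refine ⟨⟨Nat.find h', hm⟩, hPm, fun j hj hPj => ?_⟩
  exact Nat.find_min h' (show (j : ℕ) < Nat.find h' from hj) ⟨j.2, by simpa using hPj⟩

theorem min_unique {n : ℕ} {P : Fin n → Prop} {i i' : Fin n}
    (h : P i ∧ ∀ j, j < i → ¬ P j) (h' : P i' ∧ ∀ j, j < i' → ¬ P j) : i = i' := by
  rcases lt_trichotomy i i' with hlt | heq | hgt
  · exact absurd h.1 (h'.2 i hlt)
  · exact heq
  · exact absurd h'.1 (h.2 i' hgt)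

end DepUnionProof


open DepUnionProof in
/-- Semantics of the formula `D_∪(v₁ … vₙ; w₁ … wₙ)`: in a structure
with at least two elements, a team `X` satisfies it iff the union of the relations
`Wᵢ = {s(vᵢ) : s ∈ X, s(vᵢ) = s(wᵢ)}` satisfies the dependency. -/
theorem depUnion_semantics (ι : Type) (ar : ι → ℕ) (𝒟 : ∀ i, DepOn (ar i))
    (hiso : ∀ i, (𝒟 i).IsoClosed) (i₀ : ι)
    (σ : Sig) (n : ℕ) (v w : Fin n → Fin (ar i₀) → ℕ)
    (p : Fin n → ℕ) (q : ℕ) (z₀ z₁ : Fin (ar i₀) → ℕ)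
    (hnodup : (duFresh n (ar i₀) p q z₀ z₁).Nodup)
    (hfresh : ∀ x ∈ duFresh n (ar i₀) p q z₀ z₁,
      ∀ (i : Fin n) (j : Fin (ar i₀)), x ≠ v i j ∧ x ≠ w i j)
    (M : Type) (𝔐 : Struc σ M) (X : Team M) (htwo : ∃ a b : M, a ≠ b) :
    Fml.TSat 𝒟 𝔐 (depUnion i₀ n v w p q z₀ z₁) X ↔
      𝒟 i₀ M (⋃ i, pairRel X (v i) (w i)) := by
  classical
  obtain ⟨a, b, hab⟩ := htwo
  -- freshness facts
  have hfp : ∀ (x i : Fin n) (j : Fin (ar i₀)), p x ≠ v i j ∧ p x ≠ w i j :=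
    fun x i j => hfresh (p x) (by simp [duFresh]) i j
  have hfq : ∀ (i : Fin n) (j : Fin (ar i₀)), q ≠ v i j ∧ q ≠ w i j :=
    fun i j => hfresh q (by simp [duFresh]) i j
  have hfz0 : ∀ (t : Fin (ar i₀)) (i : Fin n) (j : Fin (ar i₀)),
      z₀ t ≠ v i j ∧ z₀ t ≠ w i j :=
    fun t i j => hfresh (z₀ t) (by simp [duFresh]) i j
  have hfz1 : ∀ (t : Fin (ar i₀)) (i : Fin n) (j : Fin (ar i₀)),
      z₁ t ≠ v i j ∧ z₁ t ≠ w i j :=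
    fun t i j => hfresh (z₁ t) (by simp [duFresh]) i j
  -- nodup facts
  rw [duFresh] at hnodup
  simp only [List.nodup_append, List.disjoint_append_right, List.nodup_cons,
    List.nodup_nil, List.disjoint_cons_right, List.disjoint_nil_right,
    List.mem_append, List.mem_map, List.mem_finRange, true_and, and_true,
    List.disjoint_left, not_exists, List.mem_cons, List.mem_singleton, not_or] at hnodup
  obtain ⟨⟨⟨hpnd, -, hpq⟩, hz0nd, hdis0⟩, hz1nd, hdis1⟩ := hnodup
  have hq_p : ∀ i : Fin n, q ≠ p i := fun i h => hpq (p i) ⟨i, rfl⟩ q (Or.inl rfl) h.symm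
  have hp_inj : ∀ i j : Fin n, p i = p j → i = j := fun i j h =>
    (List.nodup_map_iff_inj_on (List.nodup_finRange n)).1 hpnd i (List.mem_finRange i)
      j (List.mem_finRange j) h
  have hz0_inj : ∀ t t' : Fin (ar i₀), z₀ t = z₀ t' → t = t' := fun t t' h =>
    (List.nodup_map_iff_inj_on (List.nodup_finRange _)).1 hz0nd t (List.mem_finRange t)
      t' (List.mem_finRange t') h
  have hz1_inj : ∀ t t' : Fin (ar i₀), z₁ t = z₁ t' → t = t' := fun t t' h =>
    (List.nodup_map_iff_inj_on (List.nodup_finRange _)).1 hz1nd t (List.mem_finRange t)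
      t' (List.mem_finRange t') h
  have hp_z0 : ∀ (i : Fin n) t, p i ≠ z₀ t := fun i t h => hdis0 (p i) (Or.inl ⟨i, rfl⟩) (z₀ t) ⟨t, rfl⟩ h
  have hq_z0 : ∀ t, q ≠ z₀ t := fun t h => hdis0 q (Or.inr (Or.inl rfl)) (z₀ t) ⟨t, rfl⟩ h
  have hp_z1 : ∀ (i : Fin n) t, p i ≠ z₁ t := fun i t h =>
    hdis1 (p i) (Or.inl (Or.inl ⟨i, rfl⟩)) (z₁ t) ⟨t, rfl⟩ h
  have hq_z1 : ∀ t, q ≠ z₁ t := fun t h => hdis1 q (Or.inl (Or.inr (Or.inl rfl))) (z₁ t) ⟨t, rfl⟩ h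
  have hz01 : ∀ t t', z₀ t ≠ z₁ t' := fun t t' h => hdis1 (z₀ t) (Or.inr ⟨t, rfl⟩) (z₁ t') ⟨t', rfl⟩ h
  -- membership helpers
  have hmem_pq : ∀ x : ℕ, x ∉ (List.finRange n).map p ++ [q] ↔
      (∀ i, p i ≠ x) ∧ x ≠ q := by
    intro x
    simp only [List.mem_append, List.mem_map, List.mem_finRange, true_and,
      List.mem_singleton, not_or, not_exists]
  have hmem_z : ∀ x : ℕ,
      x ∉ (List.finRange (ar i₀)).map z₀ ++ (List.finRange (ar i₀)).map z₁ ↔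
      (∀ t, z₀ t ≠ x) ∧ (∀ t, z₁ t ≠ x) := by
    intro x
    simp only [List.mem_append, List.mem_map, List.mem_finRange, true_and, not_or,
      not_exists]
  have hq_z : q ∉ (List.finRange (ar i₀)).map z₀ ++ (List.finRange (ar i₀)).map z₁ :=
    (hmem_z q).2 ⟨fun t => (hq_z0 t).symm, fun t => (hq_z1 t).symm⟩
  have hp_z : ∀ i : Fin n,
      p i ∉ (List.finRange (ar i₀)).map z₀ ++ (List.finRange (ar i₀)).map z₁ :=
    fun i => (hmem_z (p i)).2 ⟨fun t => (hp_z0 i t).symm, fun t => (hp_z1 i t).symm⟩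
  have hv_z : ∀ (i : Fin n) (j : Fin (ar i₀)),
      v i j ∉ (List.finRange (ar i₀)).map z₀ ++ (List.finRange (ar i₀)).map z₁ :=
    fun i j => (hmem_z (v i j)).2 ⟨fun t => (hfz0 t i j).1, fun t => (hfz1 t i j).1⟩
  have hw_z : ∀ (i : Fin n) (j : Fin (ar i₀)),
      w i j ∉ (List.finRange (ar i₀)).map z₀ ++ (List.finRange (ar i₀)).map z₁ :=
    fun i j => (hmem_z (w i j)).2 ⟨fun t => (hfz0 t i j).2, fun t => (hfz1 t i j).2⟩
  have hv_pq : ∀ (i : Fin n) (j : Fin (ar i₀)), v i j ∉ (List.finRange n).map p ++ [q] :=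
    fun i j => (hmem_pq (v i j)).2 ⟨fun x => (hfp x i j).1, fun h => (hfq i j).1 h.symm⟩
  have hw_pq : ∀ (i : Fin n) (j : Fin (ar i₀)), w i j ∉ (List.finRange n).map p ++ [q] :=
    fun i j => (hmem_pq (w i j)).2 ⟨fun x => (hfp x i j).2, fun h => (hfq i j).2 h.symm⟩
  rw [depUnion_eq, allsSat, exsSat]
  set Y : Team M :=
    {s' | ∃ s ∈ X, ∀ x, x ∉ (List.finRange n).map p ++ [q] → s' x = s x} with hYdef
  constructor
  · -- forward direction
    rintro ⟨Z, hsat, hag1, hag2⟩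
    rcases hsat with ⟨Z₁, Z₂, hZsplit, hZ₁, hguard, hC1, hC2⟩
    rw [tsat_nguardF] at hZ₁
    rw [tsat_guardF] at hguard
    rw [tsat_C1F] at hC1
    rcases tsat_C2F.1 hC2 with ⟨A, B, hABsplit, hA, hB, hD⟩
    have hseteq : {xs | ∃ s ∈ B, xs = fun t => s (z₀ t)} =
        ⋃ i, pairRel X (v i) (w i) := by
      apply Set.Subset.antisymm
      · rintro xs ⟨s, hsB, rfl⟩
        have hsZ₂ : s ∈ Z₂ := hABsplit ▸ (Set.mem_union_right A hsB)
        have hsZ : s ∈ Z := hZsplit ▸ (Set.mem_union_right Z₁ hsZ₂)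
        obtain ⟨sY, hsY, hagz⟩ := hag1 s hsZ
        obtain ⟨sX, hsX, hagp⟩ := hsY
        -- minimal witness
        obtain ⟨i, hi, himin⟩ := exists_min_fin (fun i => s q = s (p i)) (hguard s hsZ₂)
        have hmatch : (∀ t, s (z₀ t) = s (v i t)) ∧ ∀ t, s (z₁ t) = s (w i t) := by
          rcases hC1 s hsZ₂ i with (⟨j, hj, hjeq⟩ | hne) | ⟨-, hm⟩
          · exact absurd hjeq (himin j hj)
          · exact absurd hi hne
          · exact hm
        have hval : ∀ j, s (v i j) = sX (v i j) ∧ s (w i j) = sX (w i j) := fun j =>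
          ⟨(hagz _ (hv_z i j)).trans (hagp _ (hv_pq i j)),
           (hagz _ (hw_z i j)).trans (hagp _ (hw_pq i j))⟩
        refine Set.mem_iUnion.2 ⟨i, sX, hsX, fun j => ?_, fun j => ?_⟩
        · show s (z₀ j) = sX (v i j)
          rw [(hmatch.1 j), (hval j).1]
        · rw [← (hval j).1, ← (hval j).2, ← hmatch.1 j, ← hmatch.2 j]
          exact hB s hsB j
      · intro xs hxs
        rcases Set.mem_iUnion.1 hxs with ⟨i, sX, hsX, hxs1, hxs2⟩
        -- build sY ∈ Y
        set sY : ℕ → M := fun x =>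
          if h : ∃ j : Fin n, p j = x then (if Classical.choose h = i then a else b)
          else if x = q then a else sX x with hsYdef
        have hsY_q : sY q = a := by
          have h1 : ¬ ∃ j : Fin n, p j = q := fun ⟨j, hj⟩ => hq_p j hj.symm
          simp [hsYdef, h1]
        have hsY_p : ∀ j : Fin n, sY (p j) = if j = i then a else b := by
          intro j
          have he : ∃ j' : Fin n, p j' = p j := ⟨j, rfl⟩
          have hch : Classical.choose he = j := hp_inj _ _ (Classical.choose_spec he)
          simp [hsYdef, he, hch]
        have hsY_off : ∀ x, (∀ j : Fin n, p j ≠ x) → x ≠ q → sY x = sX x := by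
          intro x h1 h2
          have h3 : ¬ ∃ j : Fin n, p j = x := fun ⟨j, hj⟩ => h1 j hj
          simp [hsYdef, h3, h2]
        have hsY_mem : sY ∈ Y := by
          refine ⟨sX, hsX, fun x hx => ?_⟩
          rcases (hmem_pq x).1 hx with ⟨h1, h2⟩
          exact hsY_off x h1 h2
        obtain ⟨s, hsZ, hagz⟩ := hag2 sY hsY_mem
        have hsq : s q = a := by rw [hagz q hq_z, hsY_q]
        have hsp : ∀ j : Fin n, s (p j) = if j = i then a else b := by
          intro j; rw [hagz (p j) (hp_z j), hsY_p j]
        have hsqi : s q = s (p i) := by rw [hsq, hsp i, if_pos rfl]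
        have hsZ₂ : s ∈ Z₂ := by
          rcases (hZsplit ▸ hsZ : s ∈ Z₁ ∪ Z₂) with h | h
          · exact absurd hsqi (hZ₁ s h i)
          · exact h
        have hsvw : ∀ j, s (v i j) = sX (v i j) ∧ s (w i j) = sX (w i j) := by
          intro j
          constructor
          · rw [hagz _ (hv_z i j), hsY_off _ (fun x => (hfp x i j).1)
              (fun h => (hfq i j).1 h.symm)]
          · rw [hagz _ (hw_z i j), hsY_off _ (fun x => (hfp x i j).2)
              (fun h => (hfq i j).2 h.symm)]
        have hmatch : (∀ t, s (z₀ t) = s (v i t)) ∧ ∀ t, s (z₁ t) = s (w i t) := by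
          rcases hC1 s hsZ₂ i with (⟨j, hj, hjeq⟩ | hne) | ⟨-, hm⟩
          · rw [hsq, hsp j, if_neg (Fin.ne_of_lt hj)] at hjeq
            exact absurd hjeq hab
          · exact absurd hsqi hne
          · exact hm
        have hzeq : ∀ t, s (z₀ t) = s (z₁ t) := by
          intro t
          rw [hmatch.1 t, hmatch.2 t, (hsvw t).1, (hsvw t).2, hxs2 t]
        have hsB : s ∈ B := by
          rcases (hABsplit ▸ hsZ₂ : s ∈ A ∪ B) with h | h
          · rcases hA s h with ⟨t, ht⟩
            exact absurd (hzeq t) ht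
          · exact h
        refine ⟨s, hsB, ?_⟩
        funext t
        rw [hmatch.1 t, (hsvw t).1, hxs1 t]
    rw [← hseteq]
    exact hD
  · -- backward direction
    intro hD
    -- helper for overriding z-values
    set ovr : (ℕ → M) → (Fin (ar i₀) → M) → (Fin (ar i₀) → M) → (ℕ → M) :=
      fun sY c d x =>
        if h : ∃ t, z₀ t = x then c (Classical.choose h)
        else if h : ∃ t, z₁ t = x then d (Classical.choose h) else sY x with hovrdef
    have hovr_z0 : ∀ sY c d t, ovr sY c d (z₀ t) = c t := by
      intro sY c d t
      have he : ∃ t', z₀ t' = z₀ t := ⟨t, rfl⟩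
      have hch : Classical.choose he = t := hz0_inj _ _ (Classical.choose_spec he)
      simp [hovrdef, he, hch]
    have hovr_z1 : ∀ sY c d t, ovr sY c d (z₁ t) = d t := by
      intro sY c d t
      have h0 : ¬ ∃ t', z₀ t' = z₁ t := fun ⟨t', ht'⟩ => hz01 t' t ht'
      have he : ∃ t', z₁ t' = z₁ t := ⟨t, rfl⟩
      have hch : Classical.choose he = t := hz1_inj _ _ (Classical.choose_spec he)
      simp [hovrdef, h0, he, hch]
    have hovr_off : ∀ sY c d x,
        x ∉ (List.finRange (ar i₀)).map z₀ ++ (List.finRange (ar i₀)).map z₁ →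
        ovr sY c d x = sY x := by
      intro sY c d x hx
      rcases (hmem_z x).1 hx with ⟨h0, h1⟩
      have h0' : ¬ ∃ t, z₀ t = x := fun ⟨t, ht⟩ => h0 t ht
      have h1' : ¬ ∃ t, z₁ t = x := fun ⟨t, ht⟩ => h1 t ht
      simp [hovrdef, h0', h1']
    -- the witness team
    set Z : Team M := {s' | ∃ sY ∈ Y,
      (∀ x, x ∉ (List.finRange (ar i₀)).map z₀ ++ (List.finRange (ar i₀)).map z₁ →
        s' x = sY x) ∧
      ∀ i : Fin n, (sY q = sY (p i) ∧ ∀ j, j < i → sY q ≠ sY (p j)) →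
        (∀ t, s' (z₀ t) = sY (v i t)) ∧ (∀ t, s' (z₁ t) = sY (w i t))} with hZdef
    have hovr_mem : ∀ sY ∈ Y, ∀ i : Fin n,
        (sY q = sY (p i) ∧ ∀ j, j < i → sY q ≠ sY (p j)) →
        ovr sY (fun t => sY (v i t)) (fun t => sY (w i t)) ∈ Z := by
      intro sY hsY i hmin
      refine ⟨sY, hsY,
        fun x hx => hovr_off sY (fun t => sY (v i t)) (fun t => sY (w i t)) x hx,
        fun i' hi' => ?_⟩
      have hii : i' = i := min_unique (P := fun j => sY q = sY (p j)) hi' hmin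
      subst hii
      exact ⟨fun t => hovr_z0 sY (fun t => sY (v i' t)) (fun t => sY (w i' t)) t,
        fun t => hovr_z1 sY (fun t => sY (v i' t)) (fun t => sY (w i' t)) t⟩
    refine ⟨Z, ?_, ?_, ?_⟩
    · -- satisfaction of the body
      refine ⟨{s ∈ Z | ∀ i : Fin n, s q ≠ s (p i)}, {s ∈ Z | ∃ i : Fin n, s q = s (p i)},
        ?_, ?_, ?_, ?_, ?_⟩
      · ext s
        simp only [Set.mem_union, Set.mem_setOf_eq]
        constructor
        · intro hs
          by_cases h : ∃ i : Fin n, s q = s (p i)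
          · exact Or.inr ⟨hs, h⟩
          · exact Or.inl ⟨hs, fun i hi => h ⟨i, hi⟩⟩
        · rintro (⟨hs, -⟩ | ⟨hs, -⟩) <;> exact hs
      · exact tsat_nguardF.2 fun s hs => hs.2
      · exact tsat_guardF.2 fun s hs => hs.2
      · -- C1F
        refine tsat_C1F.2 fun s hs i' => ?_
        obtain ⟨hsZ, i'', hsqi⟩ := hs
        obtain ⟨sY, hsY, hagz, hmin⟩ := hsZ
        have hsq : s q = sY q := hagz q hq_z
        have hsp : ∀ j : Fin n, s (p j) = sY (p j) := fun j => hagz (p j) (hp_z j)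
        obtain ⟨i, hi, himin⟩ := exists_min_fin (fun i => sY q = sY (p i))
          ⟨i'', by show sY q = sY (p i''); rw [← hsq, ← hsp i'']; exact hsqi⟩
        rcases lt_trichotomy i i' with hlt | heq | hgt
        · exact Or.inl (Or.inl ⟨i, hlt, by rw [hsq, hsp]; exact hi⟩)
        · subst heq
          refine Or.inr ⟨⟨fun j hj => ?_, by rw [hsq, hsp]; exact hi⟩, ?_⟩
          · rw [hsq, hsp]; exact himin j hj
          · obtain ⟨h0, h1⟩ := hmin i ⟨hi, himin⟩
            constructor
            · intro t
              rw [h0 t, ← hagz _ (hv_z i t)]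
            · intro t
              rw [h1 t, ← hagz _ (hw_z i t)]
        · refine Or.inl (Or.inr ?_)
          rw [hsq, hsp]
          exact himin i' hgt
      · -- C2F
        refine tsat_C2F.2 ⟨{s ∈ {s ∈ Z | ∃ i : Fin n, s q = s (p i)} |
            ∃ t, s (z₀ t) ≠ s (z₁ t)},
          {s ∈ {s ∈ Z | ∃ i : Fin n, s q = s (p i)} | ∀ t, s (z₀ t) = s (z₁ t)},
          ?_, fun s hs => hs.2, fun s hs => hs.2, ?_⟩
        · ext s
          simp only [Set.mem_union, Set.mem_setOf_eq]
          constructor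
          · intro hs
            by_cases h : ∀ t, s (z₀ t) = s (z₁ t)
            · exact Or.inr ⟨hs, h⟩
            · rcases not_forall.1 h with ⟨t, ht⟩
              exact Or.inl ⟨hs, t, ht⟩
          · rintro (⟨hs, -⟩ | ⟨hs, -⟩) <;> exact hs
        · -- the dependency atom: the values are exactly the union
          have hseteq : {xs | ∃ s ∈ {s ∈ {s ∈ Z | ∃ i : Fin n, s q = s (p i)} |
              ∀ t, s (z₀ t) = s (z₁ t)}, xs = fun t => s (z₀ t)} =
              ⋃ i, pairRel X (v i) (w i) := by
            apply Set.Subset.antisymm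
            · rintro xs ⟨s, ⟨⟨hsZ, i'', hsqi⟩, hzeq⟩, rfl⟩
              obtain ⟨sY, ⟨sX, hsX, hagp⟩, hagz, hmin⟩ := hsZ
              have hsq : s q = sY q := hagz q hq_z
              have hsp : ∀ j : Fin n, s (p j) = sY (p j) := fun j => hagz (p j) (hp_z j)
              obtain ⟨i, hi, himin⟩ := exists_min_fin (fun i => sY q = sY (p i))
                ⟨i'', by show sY q = sY (p i''); rw [← hsq, ← hsp i'']; exact hsqi⟩
              obtain ⟨h0, h1⟩ := hmin i ⟨hi, himin⟩
              have hvw : ∀ j, sY (v i j) = sX (v i j) ∧ sY (w i j) = sX (w i j) :=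
                fun j => ⟨hagp _ (hv_pq i j), hagp _ (hw_pq i j)⟩
              refine Set.mem_iUnion.2 ⟨i, sX, hsX, fun j => ?_, fun j => ?_⟩
              · show s (z₀ j) = sX (v i j)
                rw [h0 j, (hvw j).1]
              · rw [← (hvw j).1, ← (hvw j).2, ← h0 j, ← h1 j]
                exact hzeq j
            · intro xs hxs
              rcases Set.mem_iUnion.1 hxs with ⟨i, sX, hsX, hxs1, hxs2⟩
              set sY : ℕ → M := fun x =>
                if h : ∃ j : Fin n, p j = x then (if Classical.choose h = i then a else b)
                else if x = q then a else sX x with hsYdef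
              have hsY_q : sY q = a := by
                have h1 : ¬ ∃ j : Fin n, p j = q := fun ⟨j, hj⟩ => hq_p j hj.symm
                simp [hsYdef, h1]
              have hsY_p : ∀ j : Fin n, sY (p j) = if j = i then a else b := by
                intro j
                have he : ∃ j' : Fin n, p j' = p j := ⟨j, rfl⟩
                have hch : Classical.choose he = j := hp_inj _ _ (Classical.choose_spec he)
                simp [hsYdef, he, hch]
              have hsY_off : ∀ x, (∀ j : Fin n, p j ≠ x) → x ≠ q → sY x = sX x := by
                intro x h1 h2
                have h3 : ¬ ∃ j : Fin n, p j = x := fun ⟨j, hj⟩ => h1 j hj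
                simp [hsYdef, h3, h2]
              have hsY_mem : sY ∈ Y := by
                refine ⟨sX, hsX, fun x hx => ?_⟩
                rcases (hmem_pq x).1 hx with ⟨h1, h2⟩
                exact hsY_off x h1 h2
              have hsY_vw : ∀ (i' : Fin n) j,
                  sY (v i' j) = sX (v i' j) ∧ sY (w i' j) = sX (w i' j) := by
                intro i' j
                exact ⟨hsY_off _ (fun x => (hfp x i' j).1) (fun h => (hfq i' j).1 h.symm),
                  hsY_off _ (fun x => (hfp x i' j).2) (fun h => (hfq i' j).2 h.symm)⟩
              have hminY : sY q = sY (p i) ∧ ∀ j, j < i → sY q ≠ sY (p j) := by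
                constructor
                · rw [hsY_q, hsY_p, if_pos rfl]
                · intro j hj
                  rw [hsY_q, hsY_p, if_neg (Fin.ne_of_lt hj)]
                  exact hab
              have hs'Z : ovr sY (fun t => sY (v i t)) (fun t => sY (w i t)) ∈ Z :=
                hovr_mem sY hsY_mem i hminY
              refine ⟨ovr sY (fun t => sY (v i t)) (fun t => sY (w i t)),
                ⟨⟨hs'Z, i, ?_⟩, ?_⟩, ?_⟩
              · rw [hovr_off sY (fun t => sY (v i t)) (fun t => sY (w i t)) q hq_z,
                  hovr_off sY (fun t => sY (v i t)) (fun t => sY (w i t)) (p i) (hp_z i)]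
                exact hminY.1
              · intro t
                simp only [hovr_z0 sY (fun t => sY (v i t)) (fun t => sY (w i t)) t,
                  hovr_z1 sY (fun t => sY (v i t)) (fun t => sY (w i t)) t]
                rw [(hsY_vw i t).1, (hsY_vw i t).2, hxs2 t]
              · funext t
                show xs t = ovr sY (fun t => sY (v i t)) (fun t => sY (w i t)) (z₀ t)
                simp only [hovr_z0 sY (fun t => sY (v i t)) (fun t => sY (w i t)) t]
                rw [(hsY_vw i t).1]
                exact hxs1 t
          show 𝒟 i₀ M _
          rw [hseteq]
          exact hD
    · -- ag1 : ∀ s' ∈ Z, ∃ sY ∈ Y, ...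
      rintro s' ⟨sY, hsY, hagz, -⟩
      exact ⟨sY, hsY, hagz⟩
    · -- ag2 : ∀ sY ∈ Y, ∃ s' ∈ Z, ...
      intro sY hsY
      by_cases h : ∃ i : Fin n, sY q = sY (p i)
      · obtain ⟨i, hi, himin⟩ := exists_min_fin (fun i => sY q = sY (p i)) h
        exact ⟨ovr sY (fun t => sY (v i t)) (fun t => sY (w i t)),
          hovr_mem sY hsY i ⟨hi, himin⟩,
          fun x hx => hovr_off sY (fun t => sY (v i t)) (fun t => sY (w i t)) x hx⟩
      · refine ⟨sY, ⟨sY, hsY, fun x _ => rfl, fun i hi => absurd ⟨i, hi.1⟩ h⟩,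
          fun x _ => rfl⟩
end
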